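/- arXiv:2602.15483 — 6 statements merged into one kernel-verified Lean document; each statement's English description precedes it below -/
import Mathlib

section
/- Consider a system A·x ≥ b of d Diophantine linear inequalities with n unknowns, where the absolute values of all coefficients of A and of b are bounded by N, and moreover b ≥ 0 componentwise. If the system has a nonnegative integer solution, then it has a nonnegative integer solution x with max-norm ‖x‖_∞ ≤ (r+1)·(r·N)^r, where r = rank(A). -/
open Finset

open Matrix Submodule Module

namespace VZGS

variable {d n : ℕ}

/-- Rows of the combined constraint system `A y ≥ b, y ≥ 0`. -/
def gRow (Aq : Matrix (Fin d) (Fin n) ℚ) : Fin d ⊕ Fin n → Fin n → ℚ :=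
  Sum.elim (fun i => Aq i) (fun j => Pi.single j 1)

/-- Right-hand sides of the combined system. -/
def cVal (bq : Fin d → ℚ) : Fin d ⊕ Fin n → ℚ := Sum.elim bq 0

def Feas (Aq : Matrix (Fin d) (Fin n) ℚ) (bq : Fin d → ℚ) (y : Fin n → ℚ) : Prop :=
  ∀ k, cVal bq k ≤ gRow Aq k ⬝ᵥ y

noncomputable def tSpan (Aq : Matrix (Fin d) (Fin n) ℚ) (bq : Fin d → ℚ) (y : Fin n → ℚ) :
    Submodule ℚ (Fin n → ℚ) :=
  Submodule.span ℚ (gRow Aq '' {k | gRow Aq k ⬝ᵥ y = cVal bq k})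

lemma single_dot (j : Fin n) (y : Fin n → ℚ) : (Pi.single j 1 : Fin n → ℚ) ⬝ᵥ y = y j := by
  simp [dotProduct, Pi.single_apply]

lemma improve {Aq : Matrix (Fin d) (Fin n) ℚ} {bq : Fin d → ℚ} {y : Fin n → ℚ}
    (hy : Feas Aq bq y) (hlt : tSpan Aq bq y < ⊤) :
    ∃ y', Feas Aq bq y' ∧
      finrank ℚ (tSpan Aq bq y) < finrank ℚ (tSpan Aq bq y') := by
  classical
  obtain ⟨f, hf0, hfbot⟩ := Submodule.exists_dual_map_eq_bot_of_lt_top hlt inferInstance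
  set u : Fin n → ℚ := fun i => f (fun j => if i = j then 1 else 0) with hu
  have hfu : ∀ x : Fin n → ℚ, f x = x ⬝ᵥ u := by
    intro x
    rw [LinearMap.pi_apply_eq_sum_univ f x]
    simp [dotProduct, hu, smul_eq_mul]
  have horth : ∀ v ∈ tSpan Aq bq y, v ⬝ᵥ u = 0 := by
    intro v hv
    have : f v ∈ Submodule.map f (tSpan Aq bq y) := Submodule.mem_map_of_mem hv
    rw [hfbot, Submodule.mem_bot, hfu] at this
    exact this
  have hune : u ≠ 0 := by
    intro h
    apply hf0
    ext x
    simp [hfu, h]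
  -- tight rows are orthogonal to u
  have htight : ∀ k, gRow Aq k ⬝ᵥ y = cVal bq k → gRow Aq k ⬝ᵥ u = 0 := by
    intro k hk
    exact horth _ (Submodule.subset_span ⟨k, hk, rfl⟩)
  -- a coordinate where u ≠ 0 gives a constraint with nonzero inner product
  obtain ⟨j0, hj0⟩ : ∃ j, u j ≠ 0 := by
    by_contra h
    push_neg at h
    exact hune (funext h)
  -- choose direction w with some constraint decreasing
  obtain ⟨w, hwu, hw, hwD⟩ : ∃ w, (w = u ∨ w = -u) ∧
      (∀ k, gRow Aq k ⬝ᵥ y = cVal bq k → gRow Aq k ⬝ᵥ w = 0) ∧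
      ∃ k, gRow Aq k ⬝ᵥ w < 0 := by
    rcases lt_or_gt_of_ne hj0 with h | h
    · exact ⟨u, Or.inl rfl, htight, ⟨Sum.inr j0, by rwa [gRow, Sum.elim_inr, single_dot]⟩⟩
    · refine ⟨-u, Or.inr rfl, fun k hk => by rw [dotProduct_neg, htight k hk, neg_zero],
        ⟨Sum.inr j0, ?_⟩⟩
      rw [gRow, Sum.elim_inr, dotProduct_neg, single_dot]
      linarith
  set D : Finset (Fin d ⊕ Fin n) := univ.filter (fun k => gRow Aq k ⬝ᵥ w < 0) with hD
  have hDne : D.Nonempty := ⟨hwD.choose, by simp [hD, hwD.choose_spec]⟩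
  set q : (Fin d ⊕ Fin n) → ℚ := fun k => (gRow Aq k ⬝ᵥ y - cVal bq k) / (-(gRow Aq k ⬝ᵥ w))
    with hq
  set s : ℚ := (D.image q).min' (hDne.image q) with hs
  obtain ⟨k0, hk0D, hk0⟩ : ∃ k0 ∈ D, q k0 = s := by
    obtain ⟨k0, hk0D, hval⟩ := Finset.mem_image.mp ((D.image q).min'_mem (hDne.image q))
    exact ⟨k0, hk0D, hval⟩
  have hDlt : ∀ k ∈ D, gRow Aq k ⬝ᵥ w < 0 := fun k hk => (Finset.mem_filter.mp hk).2
  have hqpos : ∀ k ∈ D, 0 < q k := by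
    intro k hk
    have hneg := hDlt k hk
    have hslack : 0 < gRow Aq k ⬝ᵥ y - cVal bq k := by
      rcases lt_or_eq_of_le (hy k) with h | h
      · linarith
      · exact absurd (hw k h.symm) (ne_of_lt hneg)
    exact div_pos hslack (by linarith)
  have hspos : 0 < s := by
    obtain ⟨k', hk', hv⟩ := Finset.mem_image.mp ((D.image q).min'_mem (hDne.image q))
    rw [hs, ← hv]
    exact hqpos k' hk'
  have hsle : ∀ k ∈ D, s ≤ q k := fun k hk =>
    (D.image q).min'_le _ (Finset.mem_image_of_mem q hk)
  refine ⟨y + s • w, ?_, ?_⟩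
  · -- feasibility
    intro k
    rw [dotProduct_add, dotProduct_smul, smul_eq_mul]
    rcases le_or_gt 0 (gRow Aq k ⬝ᵥ w) with h | h
    · nlinarith [hy k]
    · have hk : k ∈ D := by simp [hD, h]
      have hne : gRow Aq k ⬝ᵥ w ≠ 0 := ne_of_lt h
      have h2 : s * (-(gRow Aq k ⬝ᵥ w)) ≤ gRow Aq k ⬝ᵥ y - cVal bq k := by
        calc s * (-(gRow Aq k ⬝ᵥ w)) ≤ q k * (-(gRow Aq k ⬝ᵥ w)) :=
              mul_le_mul_of_nonneg_right (hsle k hk) (by linarith)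
        _ = gRow Aq k ⬝ᵥ y - cVal bq k := by
              rw [hq]; field_simp
      nlinarith
  · -- rank increase
    have hsub : tSpan Aq bq y ≤ tSpan Aq bq (y + s • w) := by
      apply Submodule.span_mono
      apply Set.image_mono
      intro k hk
      have hk' : gRow Aq k ⬝ᵥ y = cVal bq k := hk
      have : gRow Aq k ⬝ᵥ w = 0 := hw k hk'
      show gRow Aq k ⬝ᵥ (y + s • w) = cVal bq k
      rw [dotProduct_add, dotProduct_smul, smul_eq_mul, this, mul_zero, add_zero]
      exact hk'
    have hk0w : gRow Aq k0 ⬝ᵥ w < 0 := hDlt k0 hk0D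
    have hk0tight : gRow Aq k0 ⬝ᵥ (y + s • w) = cVal bq k0 := by
      have hne : gRow Aq k0 ⬝ᵥ w ≠ 0 := ne_of_lt hk0w
      rw [dotProduct_add, dotProduct_smul, smul_eq_mul, ← hk0, hq]
      have h3 : (gRow Aq k0 ⬝ᵥ y - cVal bq k0) / -(gRow Aq k0 ⬝ᵥ w) * (gRow Aq k0 ⬝ᵥ w)
          = -(gRow Aq k0 ⬝ᵥ y - cVal bq k0) := by
        rw [div_neg, neg_mul, div_mul_cancel₀ _ hne]
      rw [h3]
      ring
    have hmem : gRow Aq k0 ∈ tSpan Aq bq (y + s • w) :=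
      Submodule.subset_span ⟨k0, hk0tight, rfl⟩
    have hnmem : gRow Aq k0 ∉ tSpan Aq bq y := by
      intro hmem'
      have := horth _ hmem'
      rcases hwu with h | h
      · rw [h] at hk0w; rw [this] at hk0w; exact lt_irrefl 0 hk0w
      · rw [h, dotProduct_neg, this, neg_zero] at hk0w; exact lt_irrefl 0 hk0w
    exact Submodule.finrank_lt_finrank_of_lt (lt_of_le_of_ne hsub
      (fun h => hnmem (h ▸ hmem)))

lemma exists_basic {Aq : Matrix (Fin d) (Fin n) ℚ} {bq : Fin d → ℚ} {y0 : Fin n → ℚ}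
    (h0 : Feas Aq bq y0) : ∃ y, Feas Aq bq y ∧ tSpan Aq bq y = ⊤ := by
  classical
  suffices H : ∀ fuel : ℕ, ∀ y : Fin n → ℚ, Feas Aq bq y →
      n ≤ finrank ℚ (tSpan Aq bq y) + fuel → ∃ y', Feas Aq bq y' ∧ tSpan Aq bq y' = ⊤ by
    exact H n y0 h0 (Nat.le_add_left n _)
  intro fuel
  induction fuel with
  | zero =>
    intro y hy hrank
    refine ⟨y, hy, ?_⟩
    apply Submodule.eq_top_of_finrank_eq
    have h1 : finrank ℚ (tSpan Aq bq y) ≤ finrank ℚ (Fin n → ℚ) :=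
      Submodule.finrank_le _
    have h2 : finrank ℚ (Fin n → ℚ) = n := by
      simp [Module.finrank_fintype_fun_eq_card]
    omega
  | succ m ih =>
    intro y hy hrank
    by_cases htop : tSpan Aq bq y = ⊤
    · exact ⟨y, hy, htop⟩
    · obtain ⟨y', hy', hlt⟩ := improve hy (lt_top_iff_ne_top.mpr htop)
      exact ih y' hy' (by omega)

lemma int_small {d n N : ℕ} (A : Matrix (Fin d) (Fin n) ℤ) (b : Fin d → ℤ)
    (hA : ∀ i j, (A i j).natAbs ≤ N) (hbN : ∀ i, (b i).natAbs ≤ N) (hb0 : ∀ i, 0 ≤ b i)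
    {y : Fin n → ℚ}
    (hfe : Feas (A.map (fun z : ℤ => (z : ℚ))) (fun i => (b i : ℚ)) y)
    (hsp : tSpan (A.map (fun z : ℤ => (z : ℚ))) (fun i => (b i : ℚ)) y = ⊤) :
    ∃ W : Fin n → ℤ, (∀ j, 0 ≤ W j) ∧ (∀ i, b i ≤ ∑ j, A i j * W j) ∧
      ∀ j, (W j).toNat ≤ ((A.map (fun z : ℤ => (z : ℚ))).rank + 1) *
        ((A.map (fun z : ℤ => (z : ℚ))).rank * N) ^ (A.map (fun z : ℤ => (z : ℚ))).rank := by
  classical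
  set Aq : Matrix (Fin d) (Fin n) ℚ := A.map (fun z : ℤ => (z : ℚ)) with hAq
  set bq : Fin d → ℚ := fun i => (b i : ℚ) with hbq
  set r : ℕ := Aq.rank with hr
  -- nonnegativity of y
  have hy0 : ∀ j, 0 ≤ y j := by
    intro j
    have := hfe (Sum.inr j)
    simpa [gRow, cVal, single_dot] using this
  -- support
  set F : Finset (Fin n) := univ.filter (fun j => y j ≠ 0) with hF
  have hyF : ∀ j, j ∉ F → y j = 0 := by
    intro j hj
    by_contra h
    exact hj (by simp [hF, h])
  -- tight A rows
  set T : Set (Fin d) := {i | Aq i ⬝ᵥ y = bq i} with hT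
  -- projection to support coordinates
  set π : (Fin n → ℚ) →ₗ[ℚ] (↥F → ℚ) := LinearMap.funLeft ℚ ℚ (fun p : ↥F => (p : Fin n))
    with hπ
  have hπsurj : Function.Surjective π :=
    LinearMap.funLeft_surjective_of_injective ℚ ℚ _ Subtype.val_injective
  have hπapp : ∀ (v : Fin n → ℚ) (p : ↥F), π v p = v p := fun v p => rfl
  -- the restricted tight rows span everything
  set S : Set (↥F → ℚ) := (fun i : Fin d => π (Aq i)) '' T with hS
  have hspanS : Submodule.span ℚ S = ⊤ := by
    have h1 : Submodule.map π (tSpan Aq bq y) = ⊤ := by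
      rw [hsp, Submodule.map_top, LinearMap.range_eq_top.mpr hπsurj]
    rw [tSpan, Submodule.map_span] at h1
    have h2 : π '' (gRow Aq '' {k | gRow Aq k ⬝ᵥ y = cVal bq k}) ⊆ insert 0 S := by
      rintro _ ⟨_, ⟨k, hk, rfl⟩, rfl⟩
      rcases k with i | j
      · exact Or.inr ⟨i, hk, rfl⟩
      · left
        have hyj : y j = 0 := by
          have : gRow Aq (Sum.inr j) ⬝ᵥ y = cVal bq (Sum.inr j) := hk
          simpa [gRow, cVal, single_dot] using this
        have hjF : j ∉ F := by simp [hF, hyj]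
        funext p
        rw [hπapp]
        have : (p : Fin n) ≠ j := fun h => hjF (h ▸ p.2)
        simp [gRow, Pi.single_apply, this.symm]
    have h3 : (⊤ : Submodule ℚ (↥F → ℚ)) ≤ Submodule.span ℚ (insert 0 S) :=
      h1 ▸ Submodule.span_mono h2
    rw [Submodule.span_insert_zero] at h3
    exact top_le_iff.mp h3
  -- extract an independent spanning subset
  obtain ⟨sset, hsub, hspan2, hind⟩ := exists_linearIndependent ℚ S
  rw [hspanS] at hspan2
  have hfin : sset.Finite := hind.setFinite
  haveI : Fintype ↥sset := hfin.fintype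
  have hBtop : ⊤ ≤ Submodule.span ℚ (Set.range ((↑) : ↥sset → (↥F → ℚ))) := by
    rw [Subtype.range_coe]
    exact hspan2.ge
  let B : Basis ↥sset ℚ (↥F → ℚ) := Basis.mk hind hBtop
  have hcard : Fintype.card ↥sset = Fintype.card ↥F := by
    rw [← Module.finrank_eq_card_basis B, Module.finrank_fintype_fun_eq_card]
  let e : ↥sset ≃ ↥F := Fintype.equivOfCardEq hcard
  -- witnesses
  have hwit0 : ∀ v : ↥sset, ∃ i : Fin d, i ∈ T ∧ π (Aq i) = (v : ↥F → ℚ) :=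
    fun v => hsub v.2
  choose wit hwitT hwitv using hwit0
  -- the square subsystem
  set M : Matrix ↥F ↥F ℤ := fun p q => A (wit (e.symm p)) (q : Fin n) with hM
  set Mq : Matrix ↥F ↥F ℚ := M.map (fun z : ℤ => (z : ℚ)) with hMq
  have hMrow : ∀ p, Mq p = ((e.symm p : ↥sset) : ↥F → ℚ) := by
    intro p
    funext q
    rw [← hwitv (e.symm p)]
    rfl
  have hMind : LinearIndependent ℚ (fun p => Mq p) := by
    have : (fun p => Mq p) = (fun p => ((e.symm p : ↥sset) : ↥F → ℚ)) := funext hMrow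
    rw [this]
    exact hind.comp e.symm e.symm.injective
  have hMunit : IsUnit Mq := Matrix.linearIndependent_rows_iff_isUnit.mp hMind
  have hMdetQ : Mq.det ≠ 0 :=
    ((Matrix.isUnit_iff_isUnit_det Mq).mp hMunit).ne_zero
  have hMdet : M.det ≠ 0 := by
    intro h
    apply hMdetQ
    have := (Int.castRingHom ℚ).map_det M
    rw [h] at this
    simpa [hMq] using this.symm
  -- tightness of the subsystem
  set yF : ↥F → ℚ := fun q => y (q : Fin n) with hyFdef
  set cq : ↥F → ℚ := fun p => bq (wit (e.symm p)) with hcq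
  have htightM : Mq *ᵥ yF = cq := by
    funext p
    have hsum : (Mq *ᵥ yF) p = ∑ q : ↥F, Aq (wit (e.symm p)) (q : Fin n) * y (q : Fin n) := by
      simp [Matrix.mulVec, dotProduct, hMq, hM, hAq, Matrix.map_apply]
      rfl
    rw [hsum]
    have h2 : ∑ q : ↥F, Aq (wit (e.symm p)) (q : Fin n) * y (q : Fin n)
        = ∑ j ∈ F, Aq (wit (e.symm p)) j * y j :=
      Finset.sum_coe_sort F (fun j => Aq (wit (e.symm p)) j * y j)
    rw [h2]
    have h3 : ∑ j ∈ F, Aq (wit (e.symm p)) j * y j = ∑ j, Aq (wit (e.symm p)) j * y j := by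
      apply Finset.sum_subset (Finset.subset_univ F)
      intro j _ hj
      rw [hyF j hj, mul_zero]
    rw [h3]
    exact hwitT (e.symm p)
  -- Cramer scaling
  have hadj : Mq.adjugate *ᵥ cq = Mq.det • yF := by
    rw [← htightM, Matrix.mulVec_mulVec, Matrix.adjugate_mul, Matrix.smul_mulVec,
      Matrix.one_mulVec]
  set cI : ↥F → ℤ := fun p => b (wit (e.symm p)) with hcI
  set w0 : ↥F → ℤ := fun p => M.det.sign * ((M.adjugate *ᵥ cI) p) with hw0def
  have hadjcast : ∀ p, (((M.adjugate *ᵥ cI) p : ℤ) : ℚ) = (Mq.adjugate *ᵥ cq) p := by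
    intro p
    have hadjm : Mq.adjugate = (M.adjugate).map (fun z : ℤ => (z : ℚ)) := by
      have := (Int.castRingHom ℚ).map_adjugate M
      simpa [hMq] using this.symm
    rw [hadjm]
    simp [Matrix.mulVec, dotProduct, hcq, hcI, hbq, Matrix.map_apply]
  have hsignmul : ((M.det.sign : ℤ) : ℚ) * (M.det : ℚ) = |(M.det : ℚ)| := by
    have : M.det.sign * M.det = |M.det| := by
      rcases lt_trichotomy M.det 0 with h | h | h
      · rw [Int.sign_eq_neg_one_of_neg h, abs_of_neg h]; ring
      · exact absurd h hMdet
      · rw [Int.sign_eq_one_of_pos h, abs_of_pos h]; ring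
    exact_mod_cast congrArg (fun z : ℤ => (z : ℚ)) this
  have hw0cast : ∀ p, ((w0 p : ℤ) : ℚ) = |(M.det : ℚ)| * yF p := by
    intro p
    rw [hw0def]
    push_cast
    rw [hadjcast p, hadj]
    have : Mq.det = ((M.det : ℤ) : ℚ) := by
      have := (Int.castRingHom ℚ).map_det M
      simpa [hMq] using this.symm
    rw [Pi.smul_apply, this, smul_eq_mul, ← mul_assoc]
    rw [show ((M.det.sign : ℤ) : ℚ) * ((M.det : ℤ) : ℚ) = |(M.det : ℚ)| from hsignmul]
  -- the global integer vector
  set W : Fin n → ℤ := fun j => if h : j ∈ F then w0 ⟨j, h⟩ else 0 with hW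
  have hWcast : ∀ j, ((W j : ℤ) : ℚ) = |(M.det : ℚ)| * y j := by
    intro j
    by_cases h : j ∈ F
    · rw [hW]; simp only [h, dif_pos]; exact hw0cast ⟨j, h⟩
    · rw [hW]; simp only [h, dif_neg, not_false_iff]
      rw [hyF j h, mul_zero, Int.cast_zero]
  have hW0 : ∀ j, 0 ≤ W j := by
    intro j
    have : (0 : ℚ) ≤ ((W j : ℤ) : ℚ) := by
      rw [hWcast j]
      exact mul_nonneg (abs_nonneg _) (hy0 j)
    exact_mod_cast this
  have habs1 : (1 : ℚ) ≤ |(M.det : ℚ)| := by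
    have h1 : (1 : ℤ) ≤ |M.det| := Int.one_le_abs hMdet
    calc (1:ℚ) ≤ ((|M.det| : ℤ) : ℚ) := by exact_mod_cast h1
    _ = |(M.det : ℚ)| := by push_cast; rfl
  -- feasibility
  have hfeW : ∀ i, b i ≤ ∑ j, A i j * W j := by
    intro i
    have hQ : (bq i : ℚ) ≤ ∑ j, Aq i j * ((W j : ℤ) : ℚ) := by
      have h1 : ∑ j, Aq i j * ((W j : ℤ) : ℚ) = |(M.det : ℚ)| * (Aq i ⬝ᵥ y) := by
        simp only [hWcast]
        rw [dotProduct, Finset.mul_sum]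
        apply Finset.sum_congr rfl
        intro j _
        ring
      rw [h1]
      have h2 : bq i ≤ Aq i ⬝ᵥ y := hfe (Sum.inl i)
      have h3 : (0:ℚ) ≤ bq i := by
        simp only [hbq]; exact_mod_cast hb0 i
      nlinarith
    have hcastsum : ((∑ j, A i j * W j : ℤ) : ℚ) = ∑ j, Aq i j * ((W j : ℤ) : ℚ) := by
      push_cast
      apply Finset.sum_congr rfl
      intro j _
      rw [hAq]
      rfl
    have hfinal : (b i : ℚ) ≤ ((∑ j, A i j * W j : ℤ) : ℚ) := by
      rw [hcastsum]
      exact hQ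
    exact_mod_cast hfinal
  -- the determinant bound
  set k : ℕ := Fintype.card ↥F with hk
  have hNbound : ∀ p, |w0 p| ≤ (k.factorial * N ^ k : ℕ) := by
    intro p
    have h1 : |w0 p| = |M.det.sign| * |(M.adjugate *ᵥ cI) p| := by
      rw [hw0def]; exact abs_mul _ _
    have hsign : |M.det.sign| ≤ 1 := by
      rcases lt_trichotomy M.det 0 with h | h | h
      · rw [Int.sign_eq_neg_one_of_neg h]; norm_num
      · exact absurd h hMdet
      · rw [Int.sign_eq_one_of_pos h]; norm_num
    have h2 : (M.adjugate *ᵥ cI) p = (M.updateCol p cI).det := by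
      rw [← Matrix.cramer_eq_adjugate_mulVec, Matrix.cramer_apply]
    have hent : ∀ q q', |(M.updateCol p cI) q q'| ≤ (N : ℤ) := by
      intro q q'
      rw [Matrix.updateCol_apply]
      split
      · rw [hcI]
        calc |b (wit (e.symm q))| = ((b (wit (e.symm q))).natAbs : ℤ) := by
              rw [Int.abs_eq_natAbs]
        _ ≤ (N : ℤ) := by exact_mod_cast hbN _
      · rw [hM]
        calc |A (wit (e.symm q)) (q' : Fin n)| = ((A (wit (e.symm q)) (q' : Fin n)).natAbs : ℤ) := by
              rw [Int.abs_eq_natAbs]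
        _ ≤ (N : ℤ) := by exact_mod_cast hA _ _
    have h3 : |(M.updateCol p cI).det| ≤ k.factorial • (N : ℤ) ^ k := by
      rw [hk]
      exact Matrix.det_le (abv := (AbsoluteValue.abs : AbsoluteValue ℤ ℤ)) hent
    rw [h1, h2]
    calc |M.det.sign| * |(M.updateCol p cI).det| ≤ 1 * |(M.updateCol p cI).det| :=
          mul_le_mul_of_nonneg_right hsign (abs_nonneg _)
    _ = |(M.updateCol p cI).det| := one_mul _
    _ ≤ k.factorial • (N : ℤ) ^ k := h3
    _ = ((k.factorial * N ^ k : ℕ) : ℤ) := by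
          push_cast
          rw [nsmul_eq_mul]
  -- k ≤ r
  have hkr : k ≤ r := by
    have hcard' : Fintype.card {x // x ∈ F} = Fintype.card ↥sset := Fintype.card_congr e.symm
    rw [hk, hcard']
    have hR : LinearIndependent ℚ (fun v : ↥sset => Aq (wit v)) := by
      apply LinearIndependent.of_comp π
      have hcomp : (⇑π ∘ fun v : ↥sset => Aq (wit v)) = (Subtype.val : ↥sset → (↥F → ℚ)) := by
        funext v
        exact hwitv v
      rw [hcomp]
      exact hind
    set P : Submodule ℚ (Fin n → ℚ) := Submodule.span ℚ (Set.range Aq) with hP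
    have hmem : ∀ v : ↥sset, Aq (wit v) ∈ P :=
      fun v => Submodule.subset_span ⟨wit v, rfl⟩
    have hvR : LinearIndependent ℚ (fun v : ↥sset => (⟨Aq (wit v), hmem v⟩ : ↥P)) := by
      apply LinearIndependent.of_comp P.subtype
      exact hR
    have hcard2 := hvR.fintype_card_le_finrank
    rw [hr, Matrix.rank_eq_finrank_span_row]
    exact hcard2
  -- conclusion
  refine ⟨W, hW0, hfeW, ?_⟩
  intro j
  by_cases hj : j ∈ F
  · have hb : W j ≤ ((r + 1) * (r * N) ^ r : ℕ) := by
      have h1 : W j ≤ (k.factorial * N ^ k : ℕ) := by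
        have : W j ≤ |w0 ⟨j, hj⟩| := by
          rw [hW]; simp only [hj, dif_pos]; exact le_abs_self _
        exact this.trans (hNbound ⟨j, hj⟩)
      have hk1 : 1 ≤ k := by
        rw [hk]
        exact Fintype.card_pos_iff.mpr ⟨⟨j, hj⟩⟩
      rcases Nat.eq_zero_or_pos N with hN | hN
      · -- N = 0 : then k.factorial * N ^ k = 0 since k ≥ 1
        have : (k.factorial * N ^ k : ℕ) = 0 := by
          rw [hN, zero_pow (by omega : k ≠ 0), mul_zero]
        rw [this] at h1
        exact h1.trans (by exact_mod_cast Nat.zero_le _)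
      · have harith : k.factorial * N ^ k ≤ (r + 1) * (r * N) ^ r := by
          have hr1 : 1 ≤ r := hk1.trans hkr
          calc k.factorial * N ^ k ≤ r.factorial * N ^ r :=
                Nat.mul_le_mul (Nat.factorial_le hkr)
                  (Nat.pow_le_pow_right hN hkr)
          _ ≤ r ^ r * N ^ r := Nat.mul_le_mul_right _ (Nat.factorial_le_pow r)
          _ = (r * N) ^ r := (mul_pow r N r).symm
          _ ≤ (r + 1) * (r * N) ^ r := Nat.le_mul_of_pos_left _ (by omega)
        exact h1.trans (by exact_mod_cast harith)
    exact Int.toNat_le.mpr hb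
  · have hzero : W j = 0 := by rw [hW]; exact dif_neg hj
    rw [hzero, Int.toNat_zero]
    exact Nat.zero_le _

end VZGS



/-- If a system A·x ≥ b of d integer linear inequalities in n unknowns, with all
coefficients of A and b bounded by N in absolute value and b ≥ 0 componentwise,
has a nonnegative integer solution, then it has one with max-norm at most
(r+1)·(r·N)^r where r is the rank of A over ℚ. -/
theorem small_nonneg_solution_of_inequalities {d n N : ℕ}
    (A : Matrix (Fin d) (Fin n) ℤ) (b : Fin d → ℤ)
    (hA : ∀ i j, (A i j).natAbs ≤ N) (hbN : ∀ i, (b i).natAbs ≤ N)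
    (hb0 : ∀ i, 0 ≤ b i)
    (hsol : ∃ x : Fin n → ℕ, ∀ i, b i ≤ ∑ j, A i j * (x j : ℤ)) :
    ∃ x : Fin n → ℕ, (∀ i, b i ≤ ∑ j, A i j * (x j : ℤ)) ∧
      ∀ j, x j ≤ ((A.map (fun z : ℤ => (z : ℚ))).rank + 1) *
        ((A.map (fun z : ℤ => (z : ℚ))).rank * N) ^ (A.map (fun z : ℤ => (z : ℚ))).rank := by

  classical
  obtain ⟨x0, hx0⟩ := hsol
  have hfe0 : VZGS.Feas (A.map (fun z : ℤ => (z : ℚ))) (fun i => (b i : ℚ))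
      (fun j => (x0 j : ℚ)) := by
    intro k
    rcases k with i | j
    · show ((b i : ℚ)) ≤ (A.map (fun z : ℤ => (z : ℚ))) i ⬝ᵥ (fun j => (x0 j : ℚ))
      have h1 : ((b i : ℤ) : ℚ) ≤ ((∑ j, A i j * (x0 j : ℤ) : ℤ) : ℚ) := by
        exact_mod_cast hx0 i
      have h2 : ((∑ j, A i j * (x0 j : ℤ) : ℤ) : ℚ)
          = (A.map (fun z : ℤ => (z : ℚ))) i ⬝ᵥ (fun j => (x0 j : ℚ)) := by
        rw [dotProduct]
        push_cast
        apply Finset.sum_congr rfl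
        intro j _
        rfl
      rw [← h2]
      exact h1
    · show (0 : ℚ) ≤ VZGS.gRow (A.map (fun z : ℤ => (z : ℚ))) (Sum.inr j) ⬝ᵥ _
      rw [VZGS.gRow, Sum.elim_inr, VZGS.single_dot]
      exact_mod_cast Nat.zero_le (x0 j)
  obtain ⟨y, hy, hsp⟩ := VZGS.exists_basic hfe0
  obtain ⟨W, hW0, hWfeas, hWbound⟩ := VZGS.int_small A b hA hbN hb0 hy hsp
  refine ⟨fun j => (W j).toNat, ?_, hWbound⟩
  intro i
  have htn : ∀ j, (((W j).toNat : ℕ) : ℤ) = W j := fun j => Int.toNat_of_nonneg (hW0 j)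
  calc b i ≤ ∑ j, A i j * W j := hWfeas i
  _ = ∑ j, A i j * (((W j).toNat : ℕ) : ℤ) := by
        apply Finset.sum_congr rfl
        intro j _
        rw [htn j]
end

section
/- Let V = (Q,T) be a d-VASS with n states and geometric dimension g whose strongly connected components form a chain (the condensation is a directed path with consecutive SCCs connected by a single transition). Then for every configuration p(u) and every C ∈ ℕ, the number of C-small configurations reachable from p(u) is at most n · (d · C)^g. -/
open Finset


/-- A transition of a `d`-dimensional VASS with state space `Fin n`:
source state, effect vector, target state. -/
abbrev Transition (n d : ℕ) := Fin n × (Fin d → ℤ) × Fin n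

/-- A `d`-VASS with states `Fin n`, given by its finite set of transitions. -/
abbrev VASS (n d : ℕ) := Finset (Transition n d)

/-- A path: a sequence of transitions of `T` in which the target state of each
transition equals the source state of the next. -/
def IsPath {n d : ℕ} (T : VASS n d) (ts : List (Transition n d)) : Prop :=
  (∀ t ∈ ts, t ∈ T) ∧ ts.Chain' (fun t t' => t.2.2 = t'.1)

/-- The effect of a path: the sum of the vectors of its transitions. -/
def effect {n d : ℕ} (ts : List (Transition n d)) : Fin d → ℤ :=
  (ts.map (fun t => t.2.1)).sum

/-- A cycle: a nonempty path whose first source state equals its last target state. -/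
def IsCycle {n d : ℕ} (T : VASS n d) (ts : List (Transition n d)) : Prop :=
  IsPath T ts ∧ ∃ h : ts ≠ [], (ts.getLast h).2.2 = (ts.head h).1

/-- Embedding of integer vectors into rational vectors. -/
def toQ {d : ℕ} (v : Fin d → ℤ) : Fin d → ℚ := fun i => (v i : ℚ)

/-- The cycle space of a VASS: the ℚ-vector space spanned by the effects of all cycles. -/
def cycleSpace {n d : ℕ} (T : VASS n d) : Submodule ℚ (Fin d → ℚ) :=
  Submodule.span ℚ { x | ∃ ts, IsCycle T ts ∧ x = toQ (effect ts) }

/-- The geometric dimension of a VASS: the dimension of its cycle space. -/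
noncomputable def geomDim {n d : ℕ} (T : VASS n d) : ℕ :=
  Module.finrank ℚ (cycleSpace T)


/-- A configuration: a state together with nonnegative counter values. -/
abbrev Config (n d : ℕ) := Fin n × (Fin d → ℕ)

/-- One step of a VASS between configurations. -/
def Step {n d : ℕ} (T : VASS n d) (c c' : Config n d) : Prop :=
  ∃ a : Fin d → ℤ, (c.1, a, c'.1) ∈ T ∧ ∀ i, (c'.2 i : ℤ) = (c.2 i : ℤ) + a i

/-- A run from `c` visiting the configurations `cs` (in order); its length is `cs.length`. -/
def IsRunFrom {n d : ℕ} (T : VASS n d) (c : Config n d) (cs : List (Config n d)) : Prop :=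
  List.Chain (Step T) c cs

/-- The final configuration of a run from `c` through `cs`. -/
def runEnd {n d : ℕ} (c : Config n d) (cs : List (Config n d)) : Config n d :=
  (c :: cs).getLast (List.cons_ne_nil _ _)

/-- Reachability between configurations. -/
def Reachable {n d : ℕ} (T : VASS n d) (c c' : Config n d) : Prop :=
  ∃ cs, IsRunFrom T c cs ∧ runEnd c cs = c'


/-- Edge relation on states induced by the transitions. -/
def StateEdge {n d : ℕ} (T : VASS n d) (p q : Fin n) : Prop := ∃ a, (p, a, q) ∈ T

/-- Reachability between states along transitions. -/
def StateReach {n d : ℕ} (T : VASS n d) : Fin n → Fin n → Prop :=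
  Relation.ReflTransGen (StateEdge T)

/-- The strongly connected components of the VASS form a chain: there is a `level`
function whose classes are exactly the SCCs, transitions stay in a level or move to
the next one, consecutive levels are connected by exactly one transition, and the
occupied levels form an initial segment of ℕ. -/
def SCCChain {n d : ℕ} (T : VASS n d) : Prop :=
  ∃ level : Fin n → ℕ,
    (∀ p q, (StateReach T p q ∧ StateReach T q p) ↔ level p = level q) ∧
    (∀ t ∈ T, level t.2.2 = level t.1 ∨ level t.2.2 = level t.1 + 1) ∧
    (∀ ℓ : ℕ, (∃ p, level p = ℓ + 1) →
      ∃! t, t ∈ T ∧ level t.1 = ℓ ∧ level t.2.2 = ℓ + 1) ∧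
    (∀ p : Fin n, ∀ k ≤ level p, ∃ q, level q = k)


/-- A clean basis of a subspace `U ⊆ ℚ^d`: a basis `b 1, …, b g` together with
injectively chosen distinguished coordinates `K 1, …, K g` on which the basis
vectors form the `g × g` identity matrix. -/
def IsCleanBasis {d g : ℕ} (U : Submodule ℚ (Fin d → ℚ)) (b : Fin g → (Fin d → ℚ))
    (K : Fin g → Fin d) : Prop :=
  LinearIndependent ℚ b ∧ Submodule.span ℚ (Set.range b) = U ∧
  Function.Injective K ∧ ∀ i j, b i (K j) = if i = j then 1 else 0


/-- A vector `v ∈ ℕ^d` is `C`-small with respect to `U` if some clean basis of `U`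
has all distinguished coordinates of `v` below `C`. -/
def CSmall {d : ℕ} (g : ℕ) (U : Submodule ℚ (Fin d → ℚ)) (C : ℕ) (v : Fin d → ℕ) : Prop :=
  ∃ (b : Fin g → (Fin d → ℚ)) (K : Fin g → Fin d),
    IsCleanBasis U b K ∧ ∀ j, v (K j) < C

/-! ### Auxiliary machinery -/

section Aux

variable {n d : ℕ}

/-- Inductive path predicate with explicit endpoints. -/
inductive PathF (T : VASS n d) : Fin n → Fin n → List (Transition n d) → Prop
  | nil (a : Fin n) : PathF T a a []
  | cons {t : Transition n d} {b : Fin n} {rest : List (Transition n d)}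
      (ht : t ∈ T) (h : PathF T t.2.2 b rest) : PathF T t.1 b (t :: rest)

lemma PathF.append {T : VASS n d} {a b c : Fin n} {l1 l2 : List (Transition n d)}
    (h1 : PathF T a b l1) (h2 : PathF T b c l2) : PathF T a c (l1 ++ l2) := by
  induction h1 with
  | nil => simpa using h2
  | cons ht _ ih => exact PathF.cons ht (ih h2)

lemma PathF.head_src {T : VASS n d} {a b : Fin n} {l : List (Transition n d)}
    (h : PathF T a b l) (hne : l ≠ []) : (l.head hne).1 = a := by
  cases h with
  | nil => exact absurd rfl hne
  | cons ht h => rfl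

lemma PathF.nil_eq {T : VASS n d} {a b : Fin n} (h : PathF T a b []) : a = b := by
  cases h; rfl

lemma PathF.last_tgt {T : VASS n d} : ∀ {l : List (Transition n d)} {a b : Fin n},
    PathF T a b l → ∀ hne : l ≠ [], (l.getLast hne).2.2 = b := by
  intro l
  induction l with
  | nil => intro a b h hne; exact absurd rfl hne
  | cons t rest ih =>
    intro a b h hne
    cases h with
    | cons ht hrest =>
      rcases eq_or_ne rest [] with rfl | hr
      · simpa using hrest.nil_eq
      · rw [List.getLast_cons hr]; exact ih hrest hr

lemma PathF.isPath {T : VASS n d} {a b : Fin n} {l : List (Transition n d)}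
    (h : PathF T a b l) : IsPath T l := by
  induction h with
  | nil => exact ⟨by simp, List.isChain_nil⟩
  | cons ht h ih =>
    refine ⟨?_, ?_⟩
    · intro t' ht'
      rcases List.mem_cons.1 ht' with rfl | h'
      · exact ht
      · exact ih.1 t' h'
    · apply List.isChain_cons.2
      refine ⟨?_, ih.2⟩
      intro y hy
      rename_i t b' rest
      have hne : rest ≠ [] := by
        intro hr; subst hr; simp at hy
      rw [List.head?_eq_head hne] at hy
      cases hy
      exact (h.head_src hne).symm

lemma effect_nil : effect ([] : List (Transition n d)) = 0 := rfl

lemma effect_cons (t : Transition n d) (l : List (Transition n d)) :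
    effect (t :: l) = t.2.1 + effect l := by
  simp [effect]

lemma effect_append (l1 l2 : List (Transition n d)) :
    effect (l1 ++ l2) = effect l1 + effect l2 := by
  simp [effect]

lemma cycle_effect_mem (T : VASS n d) {ts : List (Transition n d)} (hc : IsCycle T ts) :
    toQ (effect ts) ∈ cycleSpace T :=
  Submodule.subset_span ⟨ts, hc, rfl⟩

lemma PathF.cycle {T : VASS n d} {a : Fin n} {l : List (Transition n d)}
    (h : PathF T a a l) (hne : l ≠ []) : IsCycle T l :=
  ⟨h.isPath, hne, by rw [h.last_tgt hne, h.head_src hne]⟩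

lemma closed_effect_mem {T : VASS n d} {a : Fin n} {l : List (Transition n d)}
    (h : PathF T a a l) : toQ (effect l) ∈ cycleSpace T := by
  rcases eq_or_ne l [] with rfl | hne
  · have : toQ (effect ([] : List (Transition n d))) = 0 := by
      funext i; simp [toQ, effect]
    rw [this]; exact Submodule.zero_mem _
  · exact cycle_effect_mem T (h.cycle hne)

lemma stateReach_path {T : VASS n d} {a b : Fin n} (h : StateReach T a b) :
    ∃ l, PathF T a b l := by
  induction h with
  | refl => exact ⟨[], PathF.nil a⟩
  | tail _ hedge ih =>
    obtain ⟨l, hl⟩ := ih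
    obtain ⟨x, hx⟩ := hedge
    rename_i b' c _
    exact ⟨l ++ [(b', x, c)], hl.append (PathF.cons hx (PathF.nil c))⟩

lemma sameLevel_diff {T : VASS n d} {level : Fin n → ℕ}
    (hiff : ∀ p q, (StateReach T p q ∧ StateReach T q p) ↔ level p = level q)
    {a b : Fin n} (hl : level a = level b) {l1 l2 : List (Transition n d)}
    (h1 : PathF T a b l1) (h2 : PathF T a b l2) :
    toQ (effect l1) - toQ (effect l2) ∈ cycleSpace T := by
  obtain ⟨r, hr⟩ := stateReach_path ((hiff b a).mpr hl.symm).1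
  have m1 := closed_effect_mem (h1.append hr)
  have m2 := closed_effect_mem (h2.append hr)
  have key : toQ (effect l1) - toQ (effect l2)
      = toQ (effect (l1 ++ r)) - toQ (effect (l2 ++ r)) := by
    funext i
    simp only [Pi.sub_apply, toQ, effect_append, Pi.add_apply]
    push_cast
    ring
  rw [key]
  exact Submodule.sub_mem _ m1 m2

lemma level_mono {T : VASS n d} {level : Fin n → ℕ}
    (hstep : ∀ t ∈ T, level t.2.2 = level t.1 ∨ level t.2.2 = level t.1 + 1)
    {a b : Fin n} {l : List (Transition n d)} (h : PathF T a b l) :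
    level a ≤ level b := by
  induction h with
  | nil => exact le_refl _
  | cons ht h ih =>
    rename_i t b' rest
    rcases hstep t ht with h' | h' <;> omega

lemma path_split {T : VASS n d} {level : Fin n → ℕ}
    (hstep : ∀ t ∈ T, level t.2.2 = level t.1 ∨ level t.2.2 = level t.1 + 1)
    {a b : Fin n} {l : List (Transition n d)} (hlt : level a < level b)
    (h : PathF T a b l) :
    ∃ l1 t l2, l = l1 ++ t :: l2 ∧ PathF T a t.1 l1 ∧ t ∈ T ∧ PathF T t.2.2 b l2 ∧
      level t.1 + 1 = level b ∧ level t.2.2 = level b := by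
  induction l generalizing a with
  | nil => cases h; omega
  | cons t rest ih =>
    cases h with
    | cons ht hrest =>
      by_cases hc : level t.2.2 = level b
      · refine ⟨[], t, rest, rfl, PathF.nil _, ht, hrest, ?_, hc⟩
        rcases hstep t ht with h' | h' <;> omega
      · have hlt' : level t.2.2 < level b :=
          lt_of_le_of_ne (level_mono hstep hrest) hc
        obtain ⟨l1, t', l2, heq, hp1, ht', hp2, hl1, hl2⟩ := ih hlt' hrest
        exact ⟨t :: l1, t', l2, by simp [heq], PathF.cons ht hp1, ht', hp2, hl1, hl2⟩

lemma diff_mem_cycleSpace {T : VASS n d} {level : Fin n → ℕ}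
    (hiff : ∀ p q, (StateReach T p q ∧ StateReach T q p) ↔ level p = level q)
    (hstep : ∀ t ∈ T, level t.2.2 = level t.1 ∨ level t.2.2 = level t.1 + 1)
    (huniq : ∀ ℓ : ℕ, (∃ p, level p = ℓ + 1) →
      ∃! t, t ∈ T ∧ level t.1 = ℓ ∧ level t.2.2 = ℓ + 1)
    (p : Fin n) :
    ∀ m (q : Fin n) (l1 l2 : List (Transition n d)), level q ≤ m →
      PathF T p q l1 → PathF T p q l2 →
      toQ (effect l1) - toQ (effect l2) ∈ cycleSpace T := by
  intro m
  induction m with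
  | zero =>
    intro q l1 l2 hq h1 h2
    have hle := level_mono hstep h1
    exact sameLevel_diff hiff (by omega) h1 h2
  | succ m ih =>
    intro q l1 l2 hq h1 h2
    rcases eq_or_lt_of_le (level_mono hstep h1) with heq | hlt
    · exact sameLevel_diff hiff heq h1 h2
    · obtain ⟨A, t1, A', he1, hA, ht1T, hA', hl1a, hl1b⟩ := path_split hstep hlt h1
      obtain ⟨B, t2, B', he2, hB, ht2T, hB', hl2a, hl2b⟩ := path_split hstep hlt h2
      have huq := huniq (level t1.1) ⟨q, hl1a.symm⟩
      have e1 : t1 = huq.choose := huq.choose_spec.2 t1 ⟨ht1T, rfl, by omega⟩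
      have e2 : t2 = huq.choose := huq.choose_spec.2 t2 ⟨ht2T, by omega, by omega⟩
      have ht12 : t2 = t1 := by rw [e1, e2]
      subst ht12
      have hAB : toQ (effect A) - toQ (effect B) ∈ cycleSpace T :=
        ih t2.1 A B (by omega) hA hB
      have hA'B' : toQ (effect A') - toQ (effect B') ∈ cycleSpace T :=
        sameLevel_diff hiff (by omega : level t2.2.2 = level q) hA' hB'
      have key : toQ (effect l1) - toQ (effect l2)
          = (toQ (effect A) - toQ (effect B)) + (toQ (effect A') - toQ (effect B')) := by
        funext i
        simp only [he1, he2, Pi.sub_apply, Pi.add_apply, toQ, effect_append, effect_cons]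
        push_cast
        ring
      rw [key]
      exact Submodule.add_mem _ hAB hA'B'

lemma reach_path {T : VASS n d} {p : Fin n} {u : Fin d → ℕ} {c : Config n d}
    (h : Reachable T (p, u) c) :
    ∃ l, PathF T p c.1 l ∧ ∀ i, (c.2 i : ℤ) = (u i : ℤ) + effect l i := by
  obtain ⟨cs, hrun, hend⟩ := h
  induction cs generalizing p u with
  | nil =>
    have : c = (p, u) := by
      rw [← hend]; rfl
    subst this
    exact ⟨[], PathF.nil p, fun i => by simp [effect]⟩
  | cons c' rest ih =>
    obtain ⟨hstep, hchain⟩ : Step T (p, u) c' ∧ IsRunFrom T c' rest := List.isChain_cons_cons.1 hrun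
    obtain ⟨a, haT, hav⟩ := hstep
    have hend' : runEnd c' rest = c := by
      rw [← hend]
      simp [runEnd, List.getLast_cons]
    obtain ⟨l, hl, heff⟩ := ih hchain hend'
    refine ⟨(p, a, c'.1) :: l, PathF.cons haT hl, fun i => ?_⟩
    have h1 : (c.2 i : ℤ) = (c'.2 i : ℤ) + effect l i := heff i
    have h2 : (c'.2 i : ℤ) = (u i : ℤ) + a i := hav i
    show (c.2 i : ℤ) = (u i : ℤ) + (a i + effect l i)
    omega

lemma clean_repr {d' g : ℕ} {U : Submodule ℚ (Fin d' → ℚ)} {b : Fin g → (Fin d' → ℚ)}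
    {K : Fin g → Fin d'} (h : IsCleanBasis U b K) {x : Fin d' → ℚ} (hx : x ∈ U) :
    x = ∑ j, x (K j) • b j := by
  obtain ⟨hli, hspan, hKinj, hid⟩ := h
  rw [← hspan] at hx
  obtain ⟨c, hc⟩ := (Submodule.mem_span_range_iff_exists_fun ℚ).1 hx
  have hcj : ∀ j, c j = x (K j) := by
    intro j
    rw [← hc]
    rw [Finset.sum_apply]
    simp only [Pi.smul_apply, smul_eq_mul, hid]
    simp
  calc x = ∑ i, c i • b i := hc.symm
    _ = ∑ j, x (K j) • b j := Finset.sum_congr rfl fun j _ => by rw [hcj j]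

end Aux

/-- In a VASS with n states and geometric dimension g whose SCCs form a chain,
for any configuration p(u) and any C ∈ ℕ, the set of C-small configurations
reachable from p(u) is finite of cardinality at most n·(d·C)^g. -/
theorem card_small_reachable_le {n d g : ℕ} (T : VASS n d)
    (hchain : SCCChain T) (hg : geomDim T = g)
    (p : Fin n) (u : Fin d → ℕ) (C : ℕ) :
    {c : Config n d | Reachable T (p, u) c ∧ CSmall g (cycleSpace T) C c.2}.Finite ∧
    {c : Config n d | Reachable T (p, u) c ∧ CSmall g (cycleSpace T) C c.2}.ncard ≤
      n * (d * C) ^ g := by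
  classical
  obtain ⟨level, hiff, hstep, huniq, -⟩ := hchain
  set S := {c : Config n d | Reachable T (p, u) c ∧ CSmall g (cycleSpace T) C c.2} with hS
  have hsmall : ∀ c : S, CSmall g (cycleSpace T) C (c : Config n d).2 := fun c => c.2.2
  choose b K hclean hlt using hsmall
  let f : S → Fin n × (Fin g → Fin d) × (Fin g → Fin C) :=
    fun c => ((c : Config n d).1, K c, fun j => ⟨(c : Config n d).2 (K c j), hlt c j⟩)
  have hinj : Function.Injective f := by
    intro c c' hf
    have hf' := hf
    simp only [f, Prod.mk.injEq] at hf'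
    obtain ⟨h1, h2, h3f⟩ := hf'
    have h3 : ∀ j, (c : Config n d).2 (K c j) = (c' : Config n d).2 (K c' j) :=
      fun j => congrArg Fin.val (congrFun h3f j)
    obtain ⟨l1, hl1, he1⟩ := reach_path c.2.1
    obtain ⟨l2, hl2, he2⟩ := reach_path c'.2.1
    rw [← h1] at hl2
    have hdiff := diff_mem_cycleSpace hiff hstep huniq p (level (c : Config n d).1)
      (c : Config n d).1 l1 l2 le_rfl hl1 hl2
    set w : Fin d → ℚ :=
      fun i => ((c : Config n d).2 i : ℚ) - ((c' : Config n d).2 i : ℚ) with hw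
    have hweq : w = toQ (effect l1) - toQ (effect l2) := by
      funext i
      have e1 : (((c : Config n d).2 i : ℤ) : ℚ) = (((u i : ℤ) + effect l1 i : ℤ) : ℚ) :=
        congrArg _ (he1 i)
      have e2 : (((c' : Config n d).2 i : ℤ) : ℚ) = (((u i : ℤ) + effect l2 i : ℤ) : ℚ) :=
        congrArg _ (he2 i)
      push_cast at e1 e2
      simp only [hw, Pi.sub_apply, toQ]
      rw [e1, e2]
      ring
    have hwU : w ∈ cycleSpace T := by rw [hweq]; exact hdiff
    have hrep := clean_repr (hclean c) hwU
    have hz : ∀ j, w (K c j) = 0 := by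
      intro j
      have h3' := h3 j
      rw [← h2] at h3'
      simp [hw, h3']
    have hw0 : w = 0 := by
      rw [hrep]
      refine Finset.sum_eq_zero fun j _ => ?_
      rw [hz j, zero_smul]
    have hv : (c : Config n d).2 = (c' : Config n d).2 := by
      funext i
      have : w i = 0 := by rw [hw0]; rfl
      have : ((((c : Config n d).2 i : ℕ)) : ℚ) = (((c' : Config n d).2 i : ℕ) : ℚ) := by
        simpa [hw, sub_eq_zero] using this
      exact_mod_cast this
    exact Subtype.ext (Prod.ext h1 hv)
  have hfin : Finite S := Finite.of_injective f hinj
  refine ⟨Set.finite_coe_iff.mp hfin, ?_⟩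
  calc S.ncard = Nat.card S := (Nat.card_coe_set_eq S).symm
    _ ≤ Nat.card (Fin n × (Fin g → Fin d) × (Fin g → Fin C)) :=
        Nat.card_le_card_of_injective f hinj
    _ = n * (d * C) ^ g := by
        simp [Nat.card_eq_fintype_card, mul_pow]
end

section
/- Let U ⊆ ℚ^d be a g-dimensional vector subspace, v ∈ ℕ^d, and C ∈ ℕ. If v is C-large with respect to U, then there exists a clean basis B = {b_1, …, b_g} of U and an index i ∈ {1,…,g} such that for every coordinate j ∈ {1,…,d}, b_i[j] ≠ 0 implies v[j] ≥ C. -/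
open Finset


lemma matrix_cond_indep {d g : ℕ} {b : Fin g → (Fin d → ℚ)} {K : Fin g → Fin d}
    (h : ∀ i j, b i (K j) = if i = j then 1 else 0) : LinearIndependent ℚ b := by
  rw [Fintype.linearIndependent_iff]
  intro c hc j
  have h2 := congrFun hc (K j)
  simp only [Finset.sum_apply, Pi.smul_apply, smul_eq_mul, h, mul_ite, mul_one, mul_zero,
    Finset.sum_ite_eq', Finset.mem_univ, if_true, Pi.zero_apply] at h2
  exact h2

lemma matrix_cond_inj {d g : ℕ} {b : Fin g → (Fin d → ℚ)} {K : Fin g → Fin d}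
    (h : ∀ i j, b i (K j) = if i = j then 1 else 0) : Function.Injective K := by
  intro p q hpq
  by_contra hne
  have h1 := h p p
  have h2 := h p q
  rw [hpq] at h1
  rw [if_pos rfl] at h1
  rw [if_neg hne, h1] at h2
  exact one_ne_zero h2

lemma exists_clean_basis {d : ℕ} : ∀ (g : ℕ) (U : Submodule ℚ (Fin d → ℚ)),
    Module.finrank ℚ U = g →
    ∃ (b : Fin g → (Fin d → ℚ)) (K : Fin g → Fin d), IsCleanBasis U b K := by
  intro g
  induction g with
  | zero =>
    intro U hU
    have hbot : U = ⊥ := Submodule.finrank_eq_zero.mp hU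
    refine ⟨Fin.elim0, Fin.elim0, linearIndependent_empty_type, ?_, fun i => i.elim0,
      fun i => i.elim0⟩
    rw [hbot]
    simp [Set.range_eq_empty]
  | succ g ih =>
    intro U hU
    have hne : U ≠ ⊥ := by
      intro h
      rw [h, finrank_bot] at hU
      omega
    obtain ⟨u, huU, hu0⟩ := Submodule.exists_mem_ne_zero_of_ne_bot hne
    obtain ⟨k, hk⟩ : ∃ k, u k ≠ 0 := by
      by_contra h
      push_neg at h
      exact hu0 (funext h)
    set w : Fin d → ℚ := (u k)⁻¹ • u with hw
    have hwU : w ∈ U := U.smul_mem _ huU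
    have hwk : w k = 1 := by
      simp only [hw, Pi.smul_apply, smul_eq_mul]
      exact inv_mul_cancel₀ hk
    have hwne : w ≠ 0 := fun h => by simp [h] at hwk
    set φ : (Fin d → ℚ) →ₗ[ℚ] ℚ := LinearMap.proj k with hφ
    have hφw : φ w = 1 := hwk
    set U' := U ⊓ LinearMap.ker φ with hU'def
    have hmemU' : ∀ x, x ∈ U' ↔ x ∈ U ∧ x k = 0 := by
      intro x
      simp [hU'def, hφ, LinearMap.mem_ker]
    have hsup : U' ⊔ Submodule.span ℚ {w} = U := by
      apply le_antisymm
      · apply sup_le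
        · exact inf_le_left
        · rw [Submodule.span_singleton_le_iff_mem]; exact hwU
      · intro x hx
        rw [Submodule.mem_sup]
        refine ⟨x - x k • w, ?_, x k • w,
          Submodule.smul_mem _ _ (Submodule.mem_span_singleton_self w), by abel⟩
        rw [hmemU']
        refine ⟨Submodule.sub_mem _ hx (U.smul_mem _ hwU), ?_⟩
        simp [hwk]
    have hinf : U' ⊓ Submodule.span ℚ {w} = ⊥ := by
      rw [eq_bot_iff]
      intro x hx
      obtain ⟨hx1, hx2⟩ := Submodule.mem_inf.mp hx
      obtain ⟨c, rfl⟩ := Submodule.mem_span_singleton.mp hx2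
      rw [hmemU'] at hx1
      have : c * w k = 0 := hx1.2
      rw [hwk, mul_one] at this
      simp [this]
    have hrank : Module.finrank ℚ U' = g := by
      have h1 := Submodule.finrank_sup_add_finrank_inf_eq U' (Submodule.span ℚ {w})
      rw [hsup, hinf, hU, finrank_span_singleton hwne, finrank_bot] at h1
      omega
    obtain ⟨b', K', hi', hs', hinj', hm'⟩ := ih U' hrank
    have hb'U' : ∀ p, b' p ∈ U' := fun p => hs' ▸ Submodule.subset_span (Set.mem_range_self p)
    have hb'k : ∀ p, b' p k = 0 := fun p => ((hmemU' _).mp (hb'U' p)).2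
    have hb'U : ∀ p, b' p ∈ U := fun p => ((hmemU' _).mp (hb'U' p)).1
    set bg : Fin d → ℚ := w - ∑ p, w (K' p) • b' p with hbg
    have hbgk : bg k = 1 := by
      simp [hbg, Finset.sum_apply, hb'k, hwk]
    have hbgK' : ∀ q, bg (K' q) = 0 := by
      intro q
      simp only [hbg, Pi.sub_apply, Finset.sum_apply, Pi.smul_apply, smul_eq_mul, hm',
        mul_ite, mul_one, mul_zero, Finset.sum_ite_eq', Finset.mem_univ, if_true]
      ring
    have hmat : ∀ i j, (Fin.snoc b' bg : Fin (g+1) → Fin d → ℚ) i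
        ((Fin.snoc K' k : Fin (g+1) → Fin d) j) = if i = j then 1 else 0 := by
      intro i j
      induction i using Fin.lastCases with
      | last =>
        induction j using Fin.lastCases with
        | last => simp [hbgk]
        | cast q => simp [Fin.snoc_castSucc, hbgK' q, (Fin.castSucc_lt_last q).ne']
      | cast p =>
        induction j using Fin.lastCases with
        | last => simp [hb'k p, (Fin.castSucc_lt_last p).ne]
        | cast q => simp [Fin.snoc_castSucc, hm' p q, Fin.castSucc_inj]
    refine ⟨Fin.snoc b' bg, Fin.snoc K' k, matrix_cond_indep hmat, ?_, matrix_cond_inj hmat, hmat⟩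
    have hrange : Set.range (Fin.snoc b' bg : Fin (g+1) → Fin d → ℚ)
        = insert bg (Set.range b') := by
      ext x
      simp only [Set.mem_range, Set.mem_insert_iff]
      constructor
      · rintro ⟨i, rfl⟩
        induction i using Fin.lastCases with
        | last => left; simp
        | cast p => right; exact ⟨p, by simp⟩
      · rintro (rfl | ⟨p, rfl⟩)
        · exact ⟨Fin.last g, by simp⟩
        · exact ⟨p.castSucc, by simp⟩
    rw [hrange, Submodule.span_insert]
    apply le_antisymm
    · apply sup_le
      · rw [Submodule.span_singleton_le_iff_mem]
        exact Submodule.sub_mem _ hwU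
          (Submodule.sum_mem _ fun p _ => U.smul_mem _ (hb'U p))
      · rw [hs']; exact inf_le_left
    · rw [← hsup]
      apply sup_le
      · rw [← hs']
        exact le_sup_right
      · rw [Submodule.span_singleton_le_iff_mem]
        have : w = bg + ∑ p, w (K' p) • b' p := by simp [hbg]
        rw [this]
        apply Submodule.add_mem
        · exact le_sup_left (α := Submodule ℚ (Fin d → ℚ)) (Submodule.mem_span_singleton_self bg)
        · apply Submodule.sum_mem
          intro p _
          apply Submodule.smul_mem
          exact le_sup_right (α := Submodule ℚ (Fin d → ℚ)) (Submodule.subset_span (Set.mem_range_self p))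

/-- If v ∈ ℕ^d is C-large with respect to a g-dimensional subspace U (i.e. not C-small),
then some clean basis of U contains a vector all of whose supporting coordinates of v
are at least C. -/
theorem clean_basis_of_large {d g : ℕ} (U : Submodule ℚ (Fin d → ℚ))
    (hU : Module.finrank ℚ U = g) (v : Fin d → ℕ) (C : ℕ)
    (hlarge : ¬ CSmall g U C v) :
    ∃ (b : Fin g → (Fin d → ℚ)) (K : Fin g → Fin d), IsCleanBasis U b K ∧
      ∃ i : Fin g, ∀ j : Fin d, b i j ≠ 0 → C ≤ v j := by
  obtain ⟨b0, K0, hcb0⟩ := exists_clean_basis g U hU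
  suffices main : ∀ (n : ℕ) (b : Fin g → Fin d → ℚ) (K : Fin g → Fin d), IsCleanBasis U b K →
      (Finset.univ.filter (fun q => C ≤ v (K q))).card = n →
      ∃ (b : Fin g → (Fin d → ℚ)) (K : Fin g → Fin d), IsCleanBasis U b K ∧
        ∃ i : Fin g, ∀ j : Fin d, b i j ≠ 0 → C ≤ v j by
    exact main _ b0 K0 hcb0 rfl
  intro n
  induction n using Nat.strong_induction_on with
  | _ n ihn =>
    intro b K hcb hcard
    obtain ⟨hind, hspan, hinj, hmat⟩ := hcb
    have hex : ∃ i, C ≤ v (K i) := by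
      by_contra h
      push_neg at h
      exact hlarge ⟨b, K, ⟨hind, hspan, hinj, hmat⟩, h⟩
    obtain ⟨i, hi⟩ := hex
    by_cases hgood : ∀ j, b i j ≠ 0 → C ≤ v j
    · exact ⟨b, K, ⟨hind, hspan, hinj, hmat⟩, i, hgood⟩
    push_neg at hgood
    obtain ⟨j, hbij, hvj⟩ := hgood
    -- j is not a distinguished coordinate
    have hjK : ∀ q, K q ≠ j := by
      intro q hKq
      rcases eq_or_ne q i with rfl | hq
      · exact absurd hKq.symm (by rintro rfl; omega)
      · have := hmat i q
        rw [if_neg (Ne.symm hq), hKq] at this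
        exact hbij this
    set c : Fin d → ℚ := (b i j)⁻¹ • b i with hc
    have hcj : c j = 1 := inv_mul_cancel₀ hbij
    set b2 : Fin g → Fin d → ℚ := fun p => if p = i then c else b p - (b p j) • c with hb2
    set K2 : Fin g → Fin d := Function.update K i j with hK2
    have hK2i : K2 i = j := Function.update_self i j K
    have hK2q : ∀ q, q ≠ i → K2 q = K q := fun q hq => Function.update_of_ne hq j K
    have hmat2 : ∀ p q, b2 p (K2 q) = if p = q then 1 else 0 := by
      intro p q
      rcases eq_or_ne q i with rfl | hq
      · rw [hK2i]
        rcases eq_or_ne p q with rfl | hp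
        · simp [hb2, hcj]
        · simp only [hb2, if_neg hp, if_neg hp, Pi.sub_apply, Pi.smul_apply, smul_eq_mul, hcj]
          ring
      · rw [hK2q q hq]
        rcases eq_or_ne p i with rfl | hp
        · have : p ≠ q := by rintro rfl; exact hq rfl
          simp only [hb2, if_pos rfl, if_neg this, hc, Pi.smul_apply, smul_eq_mul,
            hmat p q, if_neg this, mul_zero]
        · simp only [hb2, if_neg hp, Pi.sub_apply, Pi.smul_apply, smul_eq_mul, hc,
            hmat i q, if_neg (by rintro rfl; exact hq rfl : i ≠ q), mul_zero, sub_zero, hmat p q]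
    have hspan2 : Submodule.span ℚ (Set.range b2) = U := by
      rw [← hspan]
      apply le_antisymm
      · rw [Submodule.span_le]
        rintro x ⟨p, rfl⟩
        rcases eq_or_ne p i with rfl | hp
        · simp only [hb2, if_pos rfl, hc]
          exact Submodule.smul_mem _ _ (Submodule.subset_span (Set.mem_range_self p))
        · simp only [hb2, if_neg hp, hc]
          exact Submodule.sub_mem _ (Submodule.subset_span (Set.mem_range_self p))
            (Submodule.smul_mem _ _ (Submodule.smul_mem _ _
              (Submodule.subset_span (Set.mem_range_self i))))
      · rw [Submodule.span_le]
        rintro x ⟨p, rfl⟩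
        have hci : c ∈ Submodule.span ℚ (Set.range b2) := by
          have : b2 i = c := if_pos rfl
          exact this ▸ Submodule.subset_span (Set.mem_range_self i)
        rcases eq_or_ne p i with rfl | hp
        · have : b p = (b p j) • c := by
            rw [hc, smul_smul, mul_inv_cancel₀ hbij, one_smul]
          rw [this]
          exact Submodule.smul_mem _ _ hci
        · have : b p = b2 p + (b p j) • c := by
            simp [hb2, if_neg hp]
          rw [this]
          exact Submodule.add_mem _ (Submodule.subset_span (Set.mem_range_self p))
            (Submodule.smul_mem _ _ hci)
    have hss : (Finset.univ.filter fun q => C ≤ v (K2 q)) ⊂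
        (Finset.univ.filter fun q => C ≤ v (K q)) := by
      constructor
      · intro q hq
        simp only [Finset.mem_filter, Finset.mem_univ, true_and] at hq ⊢
        rcases eq_or_ne q i with rfl | h
        · rw [hK2i] at hq; omega
        · rwa [hK2q q h] at hq
      · intro hsub
        have hi2 : i ∈ Finset.univ.filter fun q => C ≤ v (K q) := by
          simp only [Finset.mem_filter, Finset.mem_univ, true_and]; exact hi
        have := hsub hi2
        simp only [Finset.mem_filter, Finset.mem_univ, true_and, hK2i] at this
        omega
    exact ihn _ (hcard ▸ Finset.card_lt_card hss) b2 K2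
      ⟨matrix_cond_indep hmat2, hspan2, matrix_cond_inj hmat2, hmat2⟩ rfl
end

section
/- Let n, d, M ≥ 1 and Y ∈ ℕ, and define L_0 = n − 1 and L_i = n·(d·(M·L_{i−1} + Y))^i + L_{i−1} for i ≥ 1. Then for every g ∈ ℕ, L_g ≤ (4·n·d·M·(Y+1))^{(g+1)^{g+1}}. -/
open Finset

/-- Arithmetic bound on the Rackoff-style recursion: with L_0 = n − 1 and
L_i = n·(d·(M·L_{i−1} + Y))^i + L_{i−1}, we have L_g ≤ (4·n·d·M·(Y+1))^((g+1)^(g+1)). -/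
theorem L_le_bound (n d M Y : ℕ) (hn : 1 ≤ n) (hd : 1 ≤ d) (hM : 1 ≤ M)
    (L : ℕ → ℕ) (hL0 : L 0 = n - 1)
    (hLs : ∀ i, L (i + 1) = n * (d * (M * L i + Y)) ^ (i + 1) + L i) :
    ∀ g : ℕ, L g ≤ (4 * n * d * M * (Y + 1)) ^ ((g + 1) ^ (g + 1)) := by
  set B := 4 * n * d * M * (Y + 1) with hB
  have hB1 : 1 ≤ B := by
    rw [hB]
    have : 0 < 4 * n * d * M * (Y + 1) := by positivity
    omega
  have h4 : 4 * n * d * M ≤ B := by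
    rw [hB]; exact Nat.le_mul_of_pos_right _ (by omega)
  have hB4 : 4 ≤ B := le_trans (by nlinarith [Nat.mul_le_mul (Nat.mul_le_mul hn hd) hM]) h4
  -- strengthened invariant
  have key : ∀ g, 2 * (d * (M * L g + Y)) ≤ B ^ ((g + 1) ^ (g + 1)) := by
    intro g
    induction g with
    | zero =>
      obtain ⟨m, rfl⟩ : ∃ m, n = m + 1 := ⟨n - 1, by omega⟩
      simp only [hL0, Nat.add_sub_cancel]
      norm_num
      rw [hB]
      have h0 : M * m + Y ≤ M * ((m + 1) * (Y + 1)) := by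
        nlinarith [mul_le_mul_left hM Y]
      calc 2 * (d * (M * m + Y)) ≤ 2 * (d * (M * ((m + 1) * (Y + 1)))) := by
            exact Nat.mul_le_mul_left _ (Nat.mul_le_mul_left _ h0)
        _ = 2 * ((m + 1) * d * M * (Y + 1)) := by ring
        _ ≤ 4 * ((m + 1) * d * M * (Y + 1)) := Nat.mul_le_mul (by norm_num) le_rfl
        _ = 4 * (m + 1) * d * M * (Y + 1) := by ring
    | succ g ih =>
      set Q := d * (M * L g + Y) with hQ
      set e := (g + 1) ^ (g + 1) with he
      have hexp : e * (g + 1) + 1 ≤ (g + 2) ^ (g + 2) := by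
        have h := Nat.pow_lt_pow_left (show g + 1 < g + 2 by omega) (show g + 2 ≠ 0 by omega)
        have h2 : e * (g + 1) = (g + 1) ^ (g + 2) := by rw [he]; ring
        omega
      have hpow : (2 * Q) ^ (g + 1) ≤ (B ^ e) ^ (g + 1) :=
        Nat.pow_le_pow_left ih (g + 1)
      have h2le : 2 ≤ 2 ^ (g + 1) := by
        calc 2 = 2 ^ 1 := (pow_one 2).symm
          _ ≤ 2 ^ (g + 1) := Nat.pow_le_pow_right (by omega) (by omega)
      have hpow' : 2 * Q ^ (g + 1) ≤ B ^ (e * (g + 1)) := by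
        calc 2 * Q ^ (g + 1) ≤ 2 ^ (g + 1) * Q ^ (g + 1) := Nat.mul_le_mul h2le le_rfl
          _ = (2 * Q) ^ (g + 1) := (mul_pow 2 Q (g + 1)).symm
          _ ≤ (B ^ e) ^ (g + 1) := hpow
          _ = B ^ (e * (g + 1)) := by rw [← pow_mul]
      have hmain : 8 * (d * M * n * Q ^ (g + 1)) ≤ B ^ (e * (g + 1) + 1) := by
        calc 8 * (d * M * n * Q ^ (g + 1)) = (4 * n * d * M) * (2 * Q ^ (g + 1)) := by ring
          _ ≤ B * B ^ (e * (g + 1)) := Nat.mul_le_mul h4 hpow'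
          _ = B ^ (e * (g + 1) + 1) := by rw [pow_succ]; ring
      have htail : 8 * (d * (M * L g + Y)) ≤ B ^ (e * (g + 1) + 1) := by
        calc 8 * (d * (M * L g + Y)) = 4 * (2 * (d * (M * L g + Y))) := by ring
          _ ≤ B * B ^ e := Nat.mul_le_mul hB4 ih
          _ = B ^ (e + 1) := by rw [pow_succ]; ring
          _ ≤ B ^ (e * (g + 1) + 1) := by
              apply Nat.pow_le_pow_right hB1
              have := Nat.le_mul_of_pos_right e (show 0 < g + 1 by omega)
              omega
      have hLg1 : L (g + 1) = n * Q ^ (g + 1) + L g := by rw [hLs g, hQ]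
      have hfour : 4 * (2 * (d * (M * L (g + 1) + Y))) ≤ 2 * B ^ (e * (g + 1) + 1) := by
        rw [hLg1]
        calc 4 * (2 * (d * (M * (n * Q ^ (g + 1) + L g) + Y)))
            = 8 * (d * M * n * Q ^ (g + 1)) + 8 * (d * (M * L g + Y)) := by ring
          _ ≤ B ^ (e * (g + 1) + 1) + B ^ (e * (g + 1) + 1) := Nat.add_le_add hmain htail
          _ = 2 * B ^ (e * (g + 1) + 1) := by ring
      calc 2 * (d * (M * L (g + 1) + Y)) ≤ B ^ (e * (g + 1) + 1) := by omega
        _ ≤ B ^ ((g + 1 + 1) ^ (g + 1 + 1)) := Nat.pow_le_pow_right hB1 hexp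
  intro g
  have h := key g
  have hle : L g ≤ 2 * (d * (M * L g + Y)) := by
    calc L g ≤ M * L g := Nat.le_mul_of_pos_left _ (by omega)
      _ ≤ M * L g + Y := Nat.le_add_right _ _
      _ ≤ d * (M * L g + Y) := Nat.le_mul_of_pos_left _ (by omega)
      _ ≤ 2 * (d * (M * L g + Y)) := Nat.le_mul_of_pos_left _ (by omega)
  exact hle.trans h
end

section
/- Let U ⊆ ℚ^d be a g-dimensional vector subspace, v ∈ ℕ^d, and let C = (C_0, …, C_{g−1}) ∈ ℕ^g be sorted (C_0 ≤ … ≤ C_{g−1}). If v is C-thick with respect to U, then there exists a clean basis B = {b_1, …, b_g} of U, a number k ∈ {1,…,g}, and a set S = {i_1, …, i_k} ⊆ {1,…,g} of k indices such that for every i ∈ S and every j ∈ {1,…,d}, b_i[j] ≠ 0 implies v[j] ≥ C_{g−k}. -/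
open Finset


/-- `w ∈ ℕ^g` is `C`-bounded (for sorted `C`): for every `k ∈ {1,…,g}`, the number of
indices `i` with `w i ≥ C (g − k)` is strictly less than `k`. Here `k.rev = g − 1 − k`
plays the role of `g − (k+1)`. -/
def CBounded {g : ℕ} (C : Fin g → ℕ) (w : Fin g → ℕ) : Prop :=
  ∀ k : Fin g, (Finset.univ.filter (fun i => C k.rev ≤ w i)).card < (k : ℕ) + 1

/-- A vector `v ∈ ℕ^d` is `C`-thin with respect to `U` if some clean basis of `U`
has a `C`-bounded projection of `v` to the distinguished coordinates. -/
def CThin {d : ℕ} (g : ℕ) (U : Submodule ℚ (Fin d → ℚ)) (C : Fin g → ℕ)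
    (v : Fin d → ℕ) : Prop :=
  ∃ (b : Fin g → (Fin d → ℚ)) (K : Fin g → Fin d),
    IsCleanBasis U b K ∧ CBounded C (fun j => v (K j))


open Module

section Aux

variable {d : ℕ}


/-- The submodule of vectors of `ℚ^d` vanishing on a set `S` of coordinates. -/
def zeroOn (S : Set (Fin d)) : Submodule ℚ (Fin d → ℚ) where
  carrier := {x | ∀ j ∈ S, x j = 0}
  add_mem' := by
    intro a b ha hb j hj
    simp only [Pi.add_apply, ha j hj, hb j hj, add_zero]
  zero_mem' := by intro j hj; rfl
  smul_mem' := by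
    intro c x hx j hj
    simp only [Pi.smul_apply, hx j hj, smul_zero]

lemma mem_zeroOn {S : Set (Fin d)} {x : Fin d → ℚ} :
    x ∈ zeroOn S ↔ ∀ j ∈ S, x j = 0 := Iff.rfl

/-- If separation by the `J`-coordinates holds on an `m`-dimensional subspace `W`,
then the projection of `W` to these coordinates is surjective. -/
lemma exists_coords_surj {m : ℕ} (W : Submodule ℚ (Fin d → ℚ))
    (hm : finrank ℚ W = m) (J : Fin m → Fin d)
    (hsep : ∀ x ∈ W, (∀ l, x (J l) = 0) → x = 0) :
    ∀ y : Fin m → ℚ, ∃ w ∈ W, ∀ l, w (J l) = y l := by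
  intro y
  set f : W →ₗ[ℚ] (Fin m → ℚ) :=
    LinearMap.pi (fun l => (LinearMap.proj (J l)).comp W.subtype) with hf
  have hinj : Function.Injective f := by
    rw [← LinearMap.ker_eq_bot, LinearMap.ker_eq_bot']
    intro x hx
    exact Subtype.ext (hsep x x.2 (fun l => congrFun hx l))
  have hrange : LinearMap.range f = ⊤ := by
    apply Submodule.eq_top_of_finrank_eq
    rw [LinearMap.finrank_range_of_inj hinj, hm, Module.finrank_pi]
    simp
  obtain ⟨x, hx⟩ := LinearMap.range_eq_top.mp hrange y
  exact ⟨x, x.2, fun l => congrFun hx l⟩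

/-- Rank-nullity for the coordinate projection: if the projection of `X` to the
`J`-coordinates is surjective, then cutting those coordinates drops the rank by `m`. -/
lemma finrank_inf_zeroOn_range {m : ℕ} (X : Submodule ℚ (Fin d → ℚ)) (J : Fin m → Fin d)
    (hsurj : ∀ y : Fin m → ℚ, ∃ x ∈ X, ∀ l, x (J l) = y l) :
    finrank ℚ ↥(X ⊓ zeroOn (Set.range J)) + m = finrank ℚ ↥X := by
  set f : X →ₗ[ℚ] (Fin m → ℚ) :=
    LinearMap.pi (fun l => (LinearMap.proj (J l)).comp X.subtype) with hf
  have hrange : LinearMap.range f = ⊤ := by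
    rw [eq_top_iff]
    rintro y -
    obtain ⟨x, hx, hxy⟩ := hsurj y
    exact ⟨⟨x, hx⟩, funext hxy⟩
  have hker : LinearMap.ker f = Submodule.comap X.subtype (X ⊓ zeroOn (Set.range J)) := by
    ext x
    simp only [LinearMap.mem_ker, Submodule.mem_comap, Submodule.mem_inf]
    constructor
    · intro h
      refine ⟨x.2, ?_⟩
      rintro j ⟨l, rfl⟩
      exact congrFun h l
    · intro h
      funext l
      exact h.2 (J l) ⟨l, rfl⟩
  have e := Submodule.comapSubtypeEquivOfLe (inf_le_left : X ⊓ zeroOn (Set.range J) ≤ X)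
  have h1 := LinearMap.finrank_range_add_finrank_ker f
  rw [hrange, finrank_top, Module.finrank_pi, hker] at h1
  rw [e.finrank_eq, Fintype.card_fin] at h1
  omega



/-- Greedy coordinate selection: for an `n`-dimensional subspace `X` of `ℚ^d` and a
priority function `p`, there are `n` coordinates that separate points of `X`, each of
them supporting some vector of `X`, and such that for every threshold `c` the number of
selected coordinates of priority `≥ c` is at most the dimension of the part of `X`
supported on priority-`≥ c` coordinates. -/
lemma greedy_selection : ∀ (n : ℕ) (X : Submodule ℚ (Fin d → ℚ)),
    finrank ℚ X = n → ∀ (p : Fin d → ℕ),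
    ∃ K : Fin n → Fin d, Function.Injective K ∧
      (∀ i, ∃ x ∈ X, x (K i) ≠ 0) ∧
      (∀ x ∈ X, (∀ i, x (K i) = 0) → x = 0) ∧
      (∀ c : ℕ, ((univ : Finset (Fin n)).filter (fun i => c ≤ p (K i))).card ≤
        finrank ℚ ↥(X ⊓ zeroOn {j | p j < c})) := by
  intro n
  induction n with
  | zero =>
    intro X hX p
    refine ⟨Fin.elim0, fun i => i.elim0, fun i => i.elim0, ?_, ?_⟩
    · intro x hx _
      have : X = ⊥ := Submodule.finrank_eq_zero.mp hX
      simpa [this] using hx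
    · intro c
      simp
  | succ n ih =>
    intro X hX p
    classical
    -- pick an available coordinate of minimal priority
    have hne : X ≠ ⊥ := by
      intro hb
      rw [hb] at hX
      simp at hX
    obtain ⟨x0, hx0X, hx00⟩ := Submodule.exists_mem_ne_zero_of_ne_bot hne
    obtain ⟨ja, hja⟩ := Function.ne_iff.mp hx00
    have hAne : ((univ : Finset (Fin d)).filter (fun j => ∃ x ∈ X, x j ≠ 0)).Nonempty :=
      ⟨ja, by simp only [mem_filter, mem_univ, true_and]; exact ⟨x0, hx0X, by simpa using hja⟩⟩
    obtain ⟨j0, hj0A, hj0min⟩ := Finset.exists_min_image _ p hAne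
    rw [mem_filter] at hj0A
    obtain ⟨-, x1, hx1X, hx1j0⟩ := hj0A
    -- the hyperplane
    set X₁ := X ⊓ zeroOn {j0} with hX₁
    have hsurj1 : ∀ y : Fin 1 → ℚ, ∃ x ∈ X, ∀ l : Fin 1, x ((fun _ => j0) l) = y l := by
      intro y
      refine ⟨(y 0 / x1 j0) • x1, X.smul_mem _ hx1X, ?_⟩
      intro l
      have : l = 0 := Subsingleton.elim _ _
      subst this
      simp [div_mul_cancel₀ _ hx1j0]
    have hrk : finrank ℚ ↥X₁ + 1 = n + 1 := by
      have := finrank_inf_zeroOn_range X (fun _ : Fin 1 => j0) hsurj1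
      rw [Set.range_const] at this
      rw [hX₁]
      omega
    obtain ⟨K', hK'inj, hK'avail, hK'sep, hK'count⟩ := ih X₁ (by omega) p
    refine ⟨Fin.cons j0 K', ?_, ?_, ?_, ?_⟩
    · -- injectivity
      intro a b hab
      induction a using Fin.cases with
      | zero =>
        induction b using Fin.cases with
        | zero => rfl
        | succ b =>
          exfalso
          rw [Fin.cons_zero, Fin.cons_succ] at hab
          obtain ⟨x, hxX₁, hx⟩ := hK'avail b
          exact hx (by rw [← hab]; exact hxX₁.2 j0 rfl)
      | succ a =>
        induction b using Fin.cases with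
        | zero =>
          exfalso
          rw [Fin.cons_zero, Fin.cons_succ] at hab
          obtain ⟨x, hxX₁, hx⟩ := hK'avail a
          exact hx (by rw [hab]; exact hxX₁.2 j0 rfl)
        | succ b =>
          rw [Fin.cons_succ, Fin.cons_succ] at hab
          rw [hK'inj hab]
    · -- availability
      intro i
      induction i using Fin.cases with
      | zero => exact ⟨x1, hx1X, by rwa [Fin.cons_zero]⟩
      | succ i =>
        obtain ⟨x, hxX₁, hx⟩ := hK'avail i
        exact ⟨x, hxX₁.1, by rwa [Fin.cons_succ]⟩
    · -- separation
      intro x hx h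
      refine hK'sep x ⟨hx, ?_⟩ (fun i => by simpa using h i.succ)
      intro j hj
      rcases hj with rfl
      simpa using h 0
    · -- counting
      intro c
      by_cases hc : c ≤ p j0
      · have hXZ : X ⊓ zeroOn {j | p j < c} = X := by
          rw [inf_eq_left]
          intro x hx j hj
          by_contra hxj
          have hjA : j ∈ (univ : Finset (Fin d)).filter (fun j => ∃ x ∈ X, x j ≠ 0) := by
            simp only [mem_filter, mem_univ, true_and]
            exact ⟨x, hx, hxj⟩
          have := hj0min j hjA
          simp only [Set.mem_setOf_eq] at hj
          omega
        rw [hXZ, hX]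
        calc ((univ : Finset (Fin (n+1))).filter _).card ≤ (univ : Finset (Fin (n+1))).card :=
              Finset.card_filter_le _ _
          _ = n + 1 := by simp
      · have hcount : ((univ : Finset (Fin (n+1))).filter
            (fun i => c ≤ p ((Fin.cons j0 K' : Fin (n+1) → Fin d) i))).card =
            ((univ : Finset (Fin n)).filter (fun i => c ≤ p (K' i))).card := by
          rw [Finset.card_filter, Finset.card_filter, Fin.sum_univ_succ]
          simp only [Fin.cons_zero, Fin.cons_succ, if_neg hc, zero_add]
        rw [hcount]
        refine le_trans (hK'count c) (Submodule.finrank_mono ?_)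
        exact inf_le_inf_right _ inf_le_left





/-- From an injective separating family of coordinates one gets a clean basis; moreover
each basis vector is the unique element of `U` with the prescribed distinguished coordinates. -/
lemma cleanBasis_of_coords {g : ℕ} (U : Submodule ℚ (Fin d → ℚ)) (hU : finrank ℚ U = g)
    (K : Fin g → Fin d) (hKinj : Function.Injective K)
    (hsep : ∀ x ∈ U, (∀ i, x (K i) = 0) → x = 0) :
    ∃ b : Fin g → (Fin d → ℚ), IsCleanBasis U b K ∧
      ∀ w ∈ U, ∀ i : Fin g, (∀ j, w (K j) = (Pi.single i 1 : Fin g → ℚ) j) → b i = w := by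
  set f : U →ₗ[ℚ] (Fin g → ℚ) :=
    LinearMap.pi (fun l => (LinearMap.proj (K l)).comp U.subtype) with hf
  have hinj : Function.Injective f := by
    rw [← LinearMap.ker_eq_bot, LinearMap.ker_eq_bot']
    intro x hx
    exact Subtype.ext (hsep x x.2 (fun l => congrFun hx l))
  have hrange : LinearMap.range f = ⊤ := by
    apply Submodule.eq_top_of_finrank_eq
    rw [LinearMap.finrank_range_of_inj hinj, hU, Module.finrank_pi]
    simp
  have hbij : Function.Bijective f := ⟨hinj, LinearMap.range_eq_top.mp hrange⟩
  set e := LinearEquiv.ofBijective f hbij with he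
  refine ⟨fun i => ((e.symm ((Pi.single i 1 : Fin g → ℚ)) : U) : Fin d → ℚ), ⟨?_, ?_, hKinj, ?_⟩, ?_⟩
  · -- linear independence
    have h1 : (fun i => ((e.symm ((Pi.single i 1 : Fin g → ℚ)) : U) : Fin d → ℚ)) =
        U.subtype ∘ (fun i => e.symm ((Pi.single i 1 : Fin g → ℚ))) := rfl
    rw [h1]
    apply LinearIndependent.map' _ U.subtype (Submodule.ker_subtype U)
    have h2 : (fun i : Fin g => e.symm ((Pi.single i 1 : Fin g → ℚ))) =
        fun i => ((Pi.basisFun ℚ (Fin g)).map e.symm) i := by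
      funext i
      simp [Basis.map_apply, Pi.basisFun_apply]
    rw [h2]
    exact ((Pi.basisFun ℚ (Fin g)).map e.symm).linearIndependent
  · -- span
    have h0 : (fun i => ((e.symm ((Pi.single i 1 : Fin g → ℚ)) : U) : Fin d → ℚ)) =
        U.subtype ∘ (fun i => ((Pi.basisFun ℚ (Fin g)).map e.symm) i) := by
      funext i
      simp [Basis.map_apply, Pi.basisFun_apply]
    rw [h0, Set.range_comp, Submodule.span_image, Basis.span_eq, Submodule.map_top,
      Submodule.range_subtype]
  · -- identity on distinguished coordinates
    intro i j
    have h1 : f (e.symm ((Pi.single i 1 : Fin g → ℚ))) = (Pi.single i 1 : Fin g → ℚ) := e.apply_symm_apply _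
    have h2 := congrFun h1 j
    simp only [hf, LinearMap.pi_apply, LinearMap.comp_apply, LinearMap.proj_apply,
      Submodule.coe_subtype] at h2
    show ((e.symm ((Pi.single i 1 : Fin g → ℚ)) : U) : Fin d → ℚ) (K j) = _
    rw [h2, Pi.single_apply]
    simp [eq_comm]
  · -- uniqueness
    intro w hw i hwc
    have h1 : f ⟨w, hw⟩ = (Pi.single i 1 : Fin g → ℚ) := funext hwc
    have h2 : e.symm ((Pi.single i 1 : Fin g → ℚ)) = ⟨w, hw⟩ := by
      rw [LinearEquiv.symm_apply_eq]
      exact h1.symm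
    show ((e.symm ((Pi.single i 1 : Fin g → ℚ)) : U) : Fin d → ℚ) = w
    rw [h2]


/-- If v ∈ ℕ^d is C-thick with respect to a g-dimensional subspace U (i.e. not C-thin),
then there is a clean basis of U, a number k ∈ {1,…,g} and a set S of k indices such that
every coordinate supporting some basis vector indexed by S has value at least C (g−k) in v. -/
theorem clean_basis_of_thick {d g : ℕ} (U : Submodule ℚ (Fin d → ℚ))
    (hU : Module.finrank ℚ U = g) (v : Fin d → ℕ)
    (C : Fin g → ℕ) (hsorted : Monotone C)
    (hthick : ¬ CThin g U C v) :
    ∃ (b : Fin g → (Fin d → ℚ)) (K : Fin g → Fin d), IsCleanBasis U b K ∧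
      ∃ (k : ℕ) (hk1 : 1 ≤ k) (hkg : k ≤ g) (S : Finset (Fin g)), S.card = k ∧
        ∀ i ∈ S, ∀ j : Fin d, b i j ≠ 0 → C ⟨g - k, by omega⟩ ≤ v j := by
  classical
  -- Step 1: there is `k ∈ [1,g]` such that the part of `U` supported on coordinates of
  -- `v`-value at least `C (g-k)` has dimension at least `k`.
  have key : ∃ kf : Fin g, (kf : ℕ) + 1 ≤
      Module.finrank ℚ ↥(U ⊓ zeroOn {j | v j < C kf.rev}) := by
    by_contra hcon
    push_neg at hcon
    obtain ⟨K, hKinj, -, hKsep, hKcount⟩ := greedy_selection g U hU v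
    obtain ⟨b, hclean, -⟩ := cleanBasis_of_coords U hU K hKinj hKsep
    exact hthick ⟨b, K, hclean, fun k => lt_of_le_of_lt (hKcount (C k.rev)) (hcon k)⟩
  obtain ⟨kf, hkf⟩ := key
  set kk : ℕ := (kf : ℕ) + 1 with hkk
  have hk1 : 1 ≤ kk := by omega
  have hkg : kk ≤ g := kf.2
  set W' := U ⊓ zeroOn {j | v j < C kf.rev} with hW'
  set m := Module.finrank ℚ ↥W' with hm
  have hkm : kk ≤ m := hkf
  have hmg : m ≤ g := by
    rw [hm, ← hU]
    exact Submodule.finrank_mono inf_le_left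
  -- Stage (a): coordinates for W'
  obtain ⟨J, hJinj, hJavail, hJsep, -⟩ := greedy_selection m W' hm.symm (fun _ => 0)
  have hUsurj : ∀ y : Fin m → ℚ, ∃ x ∈ U, ∀ l, x (J l) = y l := by
    intro y
    obtain ⟨w, hwW, hwy⟩ := exists_coords_surj W' hm.symm J hJsep y
    exact ⟨w, (Submodule.mem_inf.mp hwW).1, hwy⟩
  -- Stage (b): coordinates for the complement
  set U0 := U ⊓ zeroOn (Set.range J) with hU0
  have hU0rank : Module.finrank ℚ ↥U0 + m = g := by
    rw [hU0, ← hU]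
    exact finrank_inf_zeroOn_range U J hUsurj
  set p2 : Fin d → ℕ := fun j => if ∀ x ∈ W', x j = 0 then 0 else 1 with hp2
  obtain ⟨K', hK'inj, hK'avail, hK'sep, hK'count⟩ :=
    greedy_selection (g - m) U0 (by omega) p2
  have hbot : U0 ⊓ zeroOn {j | p2 j < 1} = ⊥ := by
    rw [eq_bot_iff]
    intro x hx
    obtain ⟨hx0, hxz⟩ := Submodule.mem_inf.mp hx
    obtain ⟨hxU, hxJ⟩ := Submodule.mem_inf.mp hx0
    have hxW' : x ∈ W' := by
      rw [hW']
      refine Submodule.mem_inf.mpr ⟨hxU, ?_⟩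
      intro j hj
      apply hxz
      simp only [Set.mem_setOf_eq, hp2]
      rw [if_pos]
      · exact Nat.zero_lt_one
      · intro w hw
        exact (Submodule.mem_inf.mp hw).2 j hj
    have hx0 := hJsep x hxW' (fun l => hxJ (J l) ⟨l, rfl⟩)
    simp [hx0]
  have hK'Z : ∀ l, ∀ x ∈ W', x (K' l) = 0 := by
    have h1 := hK'count 1
    rw [hbot] at h1
    simp only [finrank_bot, Nat.le_zero, Finset.card_eq_zero,
      Finset.filter_eq_empty_iff] at h1
    intro l x hx
    by_contra hne
    apply h1 (Finset.mem_univ l)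
    simp only [hp2]
    rw [if_neg]
    · push_neg
      exact ⟨x, hx, hne⟩
  -- Assemble the coordinate family for U
  set K : Fin g → Fin d := fun i =>
    if h : (i : ℕ) < m then J ⟨i, h⟩ else K' ⟨(i : ℕ) - m, by have := i.2; omega⟩ with hK
  have hKlow : ∀ (l : Fin m), K (Fin.castLE hmg l) = J l := by
    intro l
    simp only [hK]
    split
    next h => congr 1
    next h => exact absurd (by simpa using l.2) h
  have hKhigh : ∀ (l : Fin (g - m)),
      K ⟨m + (l : ℕ), by have := l.2; omega⟩ = K' l := by
    intro l
    simp only [hK]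
    split
    next h => exact absurd h (by simp)
    next h =>
      congr 1
      exact Fin.ext (by simp)
  have hJZ : ∀ (a : Fin m) (l : Fin (g - m)), J a ≠ K' l := by
    intro a l h
    obtain ⟨x, hxW, hxne⟩ := hJavail a
    exact hxne (by rw [h]; exact hK'Z l x hxW)
  have hKinj : Function.Injective K := by
    intro a b hab
    simp only [hK] at hab
    by_cases ha : (a : ℕ) < m <;> by_cases hb2 : (b : ℕ) < m
    · rw [dif_pos ha, dif_pos hb2] at hab
      have hv := hJinj hab
      rw [Fin.mk.injEq] at hv
      exact Fin.ext hv
    · rw [dif_pos ha, dif_neg hb2] at hab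
      exact absurd hab (hJZ _ _)
    · rw [dif_neg ha, dif_pos hb2] at hab
      exact absurd hab.symm (hJZ _ _)
    · rw [dif_neg ha, dif_neg hb2] at hab
      have hv := hK'inj hab
      rw [Fin.mk.injEq] at hv
      exact Fin.ext (by omega)
  have hKsep : ∀ x ∈ U, (∀ i, x (K i) = 0) → x = 0 := by
    intro x hx h
    have hxJ : ∀ l : Fin m, x (J l) = 0 := by
      intro l
      rw [← hKlow l]
      exact h _
    have hxU0 : x ∈ U0 := by
      rw [hU0]
      refine Submodule.mem_inf.mpr ⟨hx, ?_⟩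
      rintro j ⟨l, rfl⟩
      exact hxJ l
    refine hK'sep x hxU0 (fun l => ?_)
    rw [← hKhigh l]
    exact h _
  obtain ⟨b, hclean, huniq⟩ := cleanBasis_of_coords U hU K hKinj hKsep
  refine ⟨b, K, hclean, kk, hk1, hkg,
    (univ : Finset (Fin kk)).map (Fin.castLEEmb hkg), by simp, ?_⟩
  intro i hiS j hbij
  -- i is one of the first kk ≤ m indices
  have him : (i : ℕ) < m := by
    obtain ⟨i0, -, hi0⟩ := Finset.mem_map.mp hiS
    have : (i : ℕ) = (i0 : ℕ) := by rw [← hi0]; rfl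
    omega
  -- the basis vector b i lies in W'
  obtain ⟨w, hwW, hwc⟩ := exists_coords_surj W' hm.symm J hJsep
    (fun l => (Pi.single i 1 : Fin g → ℚ) (Fin.castLE hmg l))
  have hwall : ∀ jg : Fin g, w (K jg) = (Pi.single i 1 : Fin g → ℚ) jg := by
    intro jg
    by_cases hj : (jg : ℕ) < m
    · have hjg : jg = Fin.castLE hmg ⟨(jg : ℕ), hj⟩ := Fin.ext rfl
      rw [hjg, hKlow, hwc ⟨(jg : ℕ), hj⟩]
    · have hne : jg ≠ i := by
        intro hji
        rw [hji] at hj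
        omega
      have hjg : jg = ⟨m + ((jg : ℕ) - m), by have := jg.2; omega⟩ := Fin.ext (by simp; omega)
      rw [Pi.single_eq_of_ne hne, hjg,
        hKhigh ⟨(jg : ℕ) - m, by have := jg.2; omega⟩]
      exact hK'Z _ w hwW
  have hbw : b i = w := huniq w (Submodule.mem_inf.mp hwW).1 i hwall
  rw [hbw] at hbij
  have hwz := (Submodule.mem_inf.mp hwW).2
  by_contra hlt
  push_neg at hlt
  apply hbij
  apply hwz
  have hrev : (⟨g - kk, by omega⟩ : Fin g) = kf.rev := by
    refine Fin.ext ?_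
    show g - kk = ((kf.rev : Fin g) : ℕ)
    rw [Fin.val_rev]
  show v j < C kf.rev
  rw [← hrev]
  exact hlt


end Aux
end

section
/- Let n, d, M ≥ 1 and Y ∈ ℕ, and define K_0 = n − 1 and K_i = n·d^i·∏_{j=0}^{i−1}(Y + M·K_j) + K_{i−1} for i ≥ 1. Then for every g ∈ ℕ, K_g ≤ (4·n·d·M·(Y+1))^{2^{g+1}−1}. -/
open Finset

private lemma sum_two_pow_succ (m : ℕ) :
    ∑ j ∈ Finset.range m, 2 ^ (j + 1) = 2 ^ (m + 1) - 2 := by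
  induction m with
  | zero => simp
  | succ k ih =>
    rw [Finset.sum_range_succ, ih]
    have h1 : 2 ≤ 2 ^ (k + 1) := Nat.one_lt_two_pow_iff.mpr (by omega)
    have h2 : 2 ^ (k + 2) = 2 ^ (k + 1) + 2 ^ (k + 1) := by ring
    omega

/-- Arithmetic bound on the improved recursion: with K_0 = n − 1 and
K_i = n·d^i·∏_{j<i}(Y + M·K_j) + K_{i−1}, we have K_g ≤ (4·n·d·M·(Y+1))^(2^(g+1)−1). -/
theorem K_le_bound (n d M Y : ℕ) (hn : 1 ≤ n) (hd : 1 ≤ d) (hM : 1 ≤ M)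
    (K : ℕ → ℕ) (hK0 : K 0 = n - 1)
    (hKs : ∀ i, K (i + 1) =
      n * d ^ (i + 1) * (∏ j ∈ Finset.range (i + 1), (Y + M * K j)) + K i) :
    ∀ g : ℕ, K g ≤ (4 * n * d * M * (Y + 1)) ^ (2 ^ (g + 1) - 1) := by
  set B := 4 * n * d * M * (Y + 1) with hBdef
  have hB1 : 1 ≤ B := by
    have : 1 * 1 * 1 * 1 ≤ 4 * n * d * M := by
      apply Nat.mul_le_mul; apply Nat.mul_le_mul; apply Nat.mul_le_mul <;> omega
      all_goals omega
    calc (1:ℕ) = 1 * 1 * 1 * 1 * 1 := by ring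
    _ ≤ 4 * n * d * M * (Y + 1) := Nat.mul_le_mul this (by omega)
  intro g
  induction g using Nat.strong_induction_on with
  | _ g ihg =>
    match g with
    | 0 =>
      rw [hK0]
      have : n ≤ B := by
        calc n = 1 * n * 1 * 1 * 1 := by ring
        _ ≤ 4 * n * d * M * (Y + 1) := by
            apply Nat.mul_le_mul; apply Nat.mul_le_mul; apply Nat.mul_le_mul
            · exact Nat.mul_le_mul (by omega) (le_refl n)
            all_goals omega
      calc n - 1 ≤ n := Nat.sub_le _ _
      _ ≤ B := this
      _ = B ^ (2 ^ (0 + 1) - 1) := by norm_num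
    | i + 1 =>
      -- key factor bound
      have key : ∀ j, j < i + 1 → d * (Y + M * K j) ≤ B ^ (2 ^ (j + 1)) := by
        intro j hj
        have ihj := ihg j hj
        set P := B ^ (2 ^ (j + 1) - 1) with hPdef
        have hP1 : 1 ≤ P := Nat.one_le_pow _ _ (by omega)
        have h1 : Y + M * K j ≤ M * (Y + 1) * (K j + 1) := by
          have hy : Y ≤ M * Y := Nat.le_mul_of_pos_left _ hM
          calc Y + M * K j ≤ M * Y + M * K j + (M * Y * K j + M) := by omega
            _ = M * (Y + 1) * (K j + 1) := by ring
        have h2 : K j + 1 ≤ 2 * P := by omega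
        have h3 : 2 * (d * (M * (Y + 1))) ≤ B := by
          rw [hBdef]
          calc 2 * (d * (M * (Y + 1))) = 2 * (d * M * (Y + 1)) := by ring
            _ ≤ (4 * n) * (d * M * (Y + 1)) := Nat.mul_le_mul_right _ (by omega)
            _ = 4 * n * d * M * (Y + 1) := by ring
        calc d * (Y + M * K j) ≤ d * (M * (Y + 1) * (K j + 1)) :=
              Nat.mul_le_mul_left d h1
          _ ≤ d * (M * (Y + 1) * (2 * P)) := by
              apply Nat.mul_le_mul_left
              exact Nat.mul_le_mul_left _ h2
          _ = (2 * (d * (M * (Y + 1)))) * P := by ring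
          _ ≤ B * P := Nat.mul_le_mul_right P h3
          _ = B ^ (2 ^ (j + 1)) := by
              rw [hPdef, ← pow_succ']
              congr 1
              have : 1 ≤ 2 ^ (j + 1) := Nat.one_le_two_pow
              omega
      have hprod : d ^ (i + 1) * (∏ j ∈ Finset.range (i + 1), (Y + M * K j))
          ≤ B ^ (2 ^ (i + 2) - 2) := by
        have h1 : d ^ (i + 1) * (∏ j ∈ Finset.range (i + 1), (Y + M * K j))
            = ∏ j ∈ Finset.range (i + 1), (d * (Y + M * K j)) := by
          rw [Finset.prod_mul_distrib, Finset.prod_const, Finset.card_range]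
        rw [h1]
        calc ∏ j ∈ Finset.range (i + 1), (d * (Y + M * K j))
            ≤ ∏ j ∈ Finset.range (i + 1), B ^ (2 ^ (j + 1)) := by
              apply Finset.prod_le_prod (fun j _ => Nat.zero_le _)
              intro j hj
              exact key j (Finset.mem_range.mp hj)
          _ = B ^ (∑ j ∈ Finset.range (i + 1), 2 ^ (j + 1)) := by
              rw [Finset.prod_pow_eq_pow_sum]
          _ = B ^ (2 ^ (i + 2) - 2) := by rw [sum_two_pow_succ]
      have hKi : K i ≤ B ^ (2 ^ (i + 2) - 2) := by
        have h1 := ihg i (by omega)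
        have hle : 2 ^ (i + 1) - 1 ≤ 2 ^ (i + 2) - 2 := by
          have h2 : 1 ≤ 2 ^ (i + 1) := Nat.one_le_two_pow
          have h3 : 2 ^ (i + 2) = 2 ^ (i + 1) + 2 ^ (i + 1) := by ring
          omega
        exact h1.trans (Nat.pow_le_pow_right hB1 hle)
      have h2n : n + 1 ≤ B := by
        rw [hBdef]
        have hdm : 1 ≤ d * M * (Y + 1) := Nat.one_le_iff_ne_zero.mpr (by positivity)
        calc n + 1 ≤ 4 * n * 1 := by omega
          _ ≤ 4 * n * (d * M * (Y + 1)) := Nat.mul_le_mul_left _ hdm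
          _ = 4 * n * d * M * (Y + 1) := by ring
      rw [hKs i]
      calc n * d ^ (i + 1) * (∏ j ∈ Finset.range (i + 1), (Y + M * K j)) + K i
          ≤ n * B ^ (2 ^ (i + 2) - 2) + B ^ (2 ^ (i + 2) - 2) := by
            have := Nat.mul_le_mul_left n hprod
            rw [mul_assoc]
            omega
        _ = (n + 1) * B ^ (2 ^ (i + 2) - 2) := by ring
        _ ≤ B * B ^ (2 ^ (i + 2) - 2) := Nat.mul_le_mul_right _ h2n
        _ = B ^ (2 ^ (i + 1 + 1) - 1) := by
            have h2 : (2:ℕ) ≤ 2 ^ (i + 2) := Nat.one_lt_two_pow_iff.mpr (by omega)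
            have hexp : 2 ^ (i + 1 + 1) - 1 = (2 ^ (i + 2) - 2) + 1 := by
              show 2 ^ (i + 2) - 1 = 2 ^ (i + 2) - 2 + 1
              omega
            rw [hexp]
            exact (pow_succ' B _).symm
end
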